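/- arXiv:1501.01549 — 4 statements merged into one kernel-verified Lean document; each statement's English description precedes it below -/
import Mathlib

section
/- Let P be a probability mass function on a finite set 𝒳×𝒴 and for each (x,y) with P(x,y) > 0 let ρ^{x,y} be a d×d density matrix; form the ccq-state ρ_{XYR} := Σ_{x,y} P(x,y)·|x⟩⟨x| ⊗ |y⟩⟨y| ⊗ ρ^{x,y}. Then the following are equivalent: (1) there exist density matrices ρ^y such that ρ^{x,y} = ρ^y for all (x,y) with P(x,y) > 0 (the Markov-chain condition X ↔ Y ↔ R); (2) S(X|YR) = H(X|Y); (3) S(R|YX) = S(R|Y); (4) S(X;YR) = I(X;Y). -/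
open scoped BigOperators
open Matrix
open scoped ComplexOrder

noncomputable section

/-- Base-2 Shannon entropy of a finitely supported real function. -/
def shannonEntropy {α : Type*} [Fintype α] (p : α → ℝ) : ℝ :=
  -∑ x, p x * Real.logb 2 (p x)

/-- Von Neumann entropy: base-2 Shannon entropy of the eigenvalue multiset. -/
def vonNeumannEntropy {n : Type*} [Fintype n] [DecidableEq n] (ρ : Matrix n n ℂ) : ℝ :=
  if h : ρ.IsHermitian then shannonEntropy h.eigenvalues else 0

def IsDensityMatrix {n : Type*} [Fintype n] [DecidableEq n] (ρ : Matrix n n ℂ) : Prop :=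
  ρ.PosSemidef ∧ ρ.trace = 1

namespace MarkovTFAE

open Polynomial

variable {n : Type*} [Fintype n] [DecidableEq n]

/-- Spectral entropy via characteristic polynomial roots. -/
def specEnt (A : Matrix n n ℂ) : ℝ :=
  -((A.charpoly.roots.map (fun z => z.re * Real.logb 2 z.re)).sum)

lemma charpoly_unitary_conj (U A : Matrix n n ℂ) (hU : U ∈ Matrix.unitaryGroup n ℂ) :
    (U * A * star U).charpoly = A.charpoly := by
  have hUU : U * star U = 1 := (Matrix.mem_unitaryGroup_iff).mp hU
  have hC : (U.map C) * ((star U).map C) = 1 := by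
    rw [← Matrix.map_mul, hUU, Matrix.map_one C (map_zero C) (map_one C)]
  have h1 : charmatrix (U * A * star U) =
      (U.map C) * charmatrix A * ((star U).map C) := by
    have hcomm := Matrix.scalar_commute (X : ℂ[X]) (fun r' => Commute.all _ _) (U.map C)
    rw [charmatrix, charmatrix, Matrix.mul_sub, Matrix.sub_mul]
    congr 1
    · rw [← hcomm.eq, Matrix.mul_assoc, hC, Matrix.mul_one]
    · simp only [RingHom.mapMatrix_apply]
      rw [← Matrix.map_mul, ← Matrix.map_mul]
  have h2 : (U.map C).det * ((star U).map C).det = 1 := by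
    rw [← Matrix.det_mul, hC, Matrix.det_one]
  unfold Matrix.charpoly
  rw [h1, Matrix.det_mul, Matrix.det_mul, mul_right_comm, h2, one_mul]

lemma charpoly_diagonal (g : n → ℂ) :
    (Matrix.diagonal g).charpoly = ∏ i, (X - C (g i)) := by
  unfold Matrix.charpoly
  have : charmatrix (Matrix.diagonal g) = Matrix.diagonal (fun i => X - C (g i)) := by
    ext i j
    by_cases h : i = j
    · subst h; simp
    · simp [h, Matrix.diagonal_apply_ne _ h]
  rw [this, Matrix.det_diagonal]

lemma roots_charpoly_unitary_diag (U : Matrix n n ℂ) (hU : U ∈ Matrix.unitaryGroup n ℂ)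
    (g : n → ℂ) :
    (U * Matrix.diagonal g * star U).charpoly.roots = Finset.univ.val.map g := by
  rw [charpoly_unitary_conj U _ hU, charpoly_diagonal]
  have hne : (∏ i : n, (X - C (g i))) ≠ 0 :=
    (monic_prod_of_monic _ _ fun i _ => monic_X_sub_C (g i)).ne_zero
  rw [Polynomial.roots_prod _ _ hne]
  simp

lemma specEnt_unitary_diag (U : Matrix n n ℂ) (hU : U ∈ Matrix.unitaryGroup n ℂ)
    (g : n → ℝ) :
    specEnt (U * Matrix.diagonal (fun i => (g i : ℂ)) * star U) = shannonEntropy g := by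
  rw [specEnt, roots_charpoly_unitary_diag U hU, Multiset.map_map, shannonEntropy]
  rw [Finset.sum_eq_multiset_sum]
  simp [Function.comp]

lemma specEnt_zero : specEnt (0 : Matrix n n ℂ) = 0 := by
  have h : (0 : Matrix n n ℂ) = 1 * Matrix.diagonal (fun _ => ((0:ℝ):ℂ)) * star 1 := by simp
  rw [h, specEnt_unitary_diag 1 (one_mem _) (fun _ => (0:ℝ))]
  simp [shannonEntropy]

lemma specEnt_hermitian {A : Matrix n n ℂ} (hA : A.IsHermitian) :
    specEnt A = shannonEntropy hA.eigenvalues := by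
  conv_lhs => rw [hA.spectral_theorem]
  exact specEnt_unitary_diag _ (hA.eigenvectorUnitary).2 _

lemma charmatrix_blockDiagonal {o : Type*} [Fintype o] [DecidableEq o]
    (M : o → Matrix n n ℂ) :
    charmatrix (Matrix.blockDiagonal M) = Matrix.blockDiagonal (fun k => charmatrix (M k)) := by
  ext ⟨i, k⟩ ⟨j, l⟩
  by_cases h : k = l
  · subst h
    by_cases hij : i = j
    · subst hij; simp [Matrix.blockDiagonal_apply]
    · simp [Matrix.blockDiagonal_apply, charmatrix_apply, Matrix.diagonal_apply, hij,
        Prod.ext_iff]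
  · simp [Matrix.blockDiagonal_apply, charmatrix_apply, Matrix.diagonal_apply, h, Prod.ext_iff]

lemma charpoly_blockDiagonal {o : Type*} [Fintype o] [DecidableEq o]
    (M : o → Matrix n n ℂ) :
    (Matrix.blockDiagonal M).charpoly = ∏ k, (M k).charpoly := by
  unfold Matrix.charpoly
  rw [charmatrix_blockDiagonal, Matrix.det_blockDiagonal]

lemma specEnt_blockDiagonal {o : Type*} [Fintype o] [DecidableEq o]
    (M : o → Matrix n n ℂ) :
    specEnt (Matrix.blockDiagonal M) = ∑ k, specEnt (M k) := by
  have hne : (∏ k : o, (M k).charpoly) ≠ 0 :=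
    (monic_prod_of_monic _ _ fun k _ => Matrix.charpoly_monic _).ne_zero
  rw [specEnt, charpoly_blockDiagonal, Polynomial.roots_prod _ _ hne,
    Multiset.map_bind, Multiset.sum_bind, ← Finset.sum_eq_multiset_sum,
    ← Finset.sum_neg_distrib]
  rfl

lemma isHermitian_blockDiagonal {o : Type*} [DecidableEq o] (M : o → Matrix n n ℂ)
    (h : ∀ k, (M k).IsHermitian) : (Matrix.blockDiagonal M).IsHermitian := by
  unfold Matrix.IsHermitian
  rw [Matrix.blockDiagonal_conjTranspose]
  exact congrArg _ (funext fun k => h k)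

lemma shannonEntropy_smul {c : ℝ} (hc : 0 ≤ c) (g : n → ℝ) (hg : ∀ i, 0 ≤ g i) :
    shannonEntropy (fun i => c * g i)
      = c * shannonEntropy g - (∑ i, g i) * (c * Real.logb 2 c) := by
  unfold shannonEntropy
  have key : ∀ i, c * g i * Real.logb 2 (c * g i)
      = c * (g i * Real.logb 2 (g i)) + (c * Real.logb 2 c) * g i := by
    intro i
    rcases eq_or_lt_of_le hc with h0 | hcpos
    · simp [← h0]
    rcases eq_or_lt_of_le (hg i) with h0 | hgpos
    · simp [← h0]
    unfold Real.logb
    rw [Real.log_mul (ne_of_gt hcpos) (ne_of_gt hgpos)]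
    ring
  simp only [key, Finset.sum_add_distrib, ← Finset.mul_sum]
  ring

lemma sum_eigenvalues_eq_one {A : Matrix n n ℂ} (hH : A.IsHermitian) (htr : A.trace = 1) :
    ∑ i, hH.eigenvalues i = 1 := by
  have h : A.trace = ∑ i, ((hH.eigenvalues i : ℝ) : ℂ) := by
    conv_lhs => rw [hH.spectral_theorem, Unitary.conjStarAlgAut_apply]
    rw [Matrix.trace_mul_comm, ← Matrix.mul_assoc,
      (Matrix.mem_unitaryGroup_iff').mp (hH.eigenvectorUnitary).2, Matrix.one_mul,
      Matrix.trace_diagonal]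
    simp
  rw [htr] at h
  have := congrArg Complex.re h.symm
  simpa using this

lemma specEnt_real_smul {c : ℝ} (hc : 0 ≤ c) {A : Matrix n n ℂ} (hA : A.PosSemidef)
    (htr : A.trace = 1) :
    specEnt ((c : ℂ) • A) = c * specEnt A - (c * Real.logb 2 c) := by
  have hH := hA.1
  have h1 : (c:ℂ) • A = hH.eigenvectorUnitary.1 *
      Matrix.diagonal (fun i => ((c * hH.eigenvalues i : ℝ) : ℂ)) *
      star hH.eigenvectorUnitary.1 := by
    have hd : (c:ℂ) • Matrix.diagonal (RCLike.ofReal ∘ hH.eigenvalues)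
        = Matrix.diagonal (fun i => ((c * hH.eigenvalues i : ℝ) : ℂ)) := by
      ext i j
      by_cases hij : i = j
      · subst hij
        simp [Matrix.diagonal_apply_eq]
      · simp [Matrix.diagonal_apply_ne _ hij]
    conv_lhs => rw [hH.spectral_theorem, Unitary.conjStarAlgAut_apply]
    rw [← Matrix.smul_mul, ← Matrix.mul_smul, hd]
  rw [h1, specEnt_unitary_diag _ (hH.eigenvectorUnitary).2,
    shannonEntropy_smul hc _ (fun i => hA.eigenvalues_nonneg i),
    sum_eigenvalues_eq_one hH htr, specEnt_hermitian hH]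
  ring

section Klein

variable {κ : Type*} [Fintype κ]

lemma real_klein (a b : κ → ℝ) (w : κ → κ → ℝ)
    (ha : ∀ k, 0 ≤ a k) (hb : ∀ j, 0 ≤ b j) (hw : ∀ k j, 0 ≤ w k j)
    (hrow : ∀ k, ∑ j, w k j = 1) (hcol : ∀ j, ∑ k, w k j = 1)
    (ha1 : ∑ k, a k = 1) (hb1 : ∑ j, b j = 1)
    (hsupp : ∀ j, b j = 0 → ∀ k, a k * w k j = 0) :
    (∑ k, ∑ j, a k * w k j * Real.log (b j)) ≤ (∑ k, a k * Real.log (a k)) ∧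
    ((∑ k, ∑ j, a k * w k j * Real.log (b j)) = (∑ k, a k * Real.log (a k)) →
      ∀ k j, w k j ≠ 0 → a k = b j) := by
  set T : κ → κ → ℝ := fun k j => a k * w k j * (Real.log (a k) - Real.log (b j)) with hT
  set S : κ → κ → ℝ := fun k j => w k j * (a k - b j) with hS
  have hTS : ∀ k j, S k j ≤ T k j := by
    intro k j
    rcases eq_or_lt_of_le (hw k j) with hw0 | hwpos
    · simp [hT, hS, ← hw0]
    rcases eq_or_lt_of_le (hb j) with hb0 | hbpos
    · have h0 := hsupp j hb0.symm k
      have ha0 : a k = 0 := by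
        rcases mul_eq_zero.mp h0 with h | h
        · exact h
        · exact absurd h (ne_of_gt hwpos)
      simp [hT, hS, ha0, ← hb0]
    rcases eq_or_lt_of_le (ha k) with ha0 | hapos
    · have h1 : S k j = w k j * (0 - b j) := by simp only [hS]; rw [← ha0]
      have h2 : T k j = 0 := by simp only [hT]; rw [← ha0]; ring
      rw [h1, h2]
      nlinarith
    · have hlog : Real.log (b j / a k) ≤ b j / a k - 1 :=
        Real.log_le_sub_one_of_pos (by positivity)
      rw [Real.log_div (ne_of_gt hbpos) (ne_of_gt hapos)] at hlog
      have h1 : a k - b j ≤ a k * (Real.log (a k) - Real.log (b j)) := by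
        have h2 := mul_le_mul_of_nonneg_left hlog (le_of_lt hapos)
        have hba : a k * (b j / a k - 1) = b j - a k := by field_simp
        nlinarith
      have h3 := mul_le_mul_of_nonneg_left h1 (hw k j)
      simp only [hS, hT]
      nlinarith
  have h1 : ∀ k, ∑ j, w k j * a k = a k := fun k => by
    rw [← Finset.sum_mul, hrow, one_mul]
  have h2 : ∀ j, ∑ k, w k j * b j = b j := fun j => by
    rw [← Finset.sum_mul, hcol, one_mul]
  have hsumS : ∑ k, ∑ j, S k j = 0 := by
    calc ∑ k, ∑ j, S k j
        = ∑ k, ((∑ j, w k j * a k) - (∑ j, w k j * b j)) := by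
          apply Finset.sum_congr rfl
          intro k _
          rw [← Finset.sum_sub_distrib]
          apply Finset.sum_congr rfl
          intro j _
          rw [hS]; ring
      _ = (∑ k, a k) - ∑ k, ∑ j, w k j * b j := by
          rw [Finset.sum_sub_distrib]
          congr 1
          exact Finset.sum_congr rfl fun k _ => h1 k
      _ = 1 - ∑ j, ∑ k, w k j * b j := by rw [ha1, Finset.sum_comm]
      _ = 0 := by rw [Finset.sum_congr rfl fun j _ => h2 j, hb1]; ring
  have h3 : ∀ k, ∑ j, a k * w k j * Real.log (a k) = a k * Real.log (a k) := by
    intro k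
    have : ∀ j, a k * w k j * Real.log (a k) = (a k * Real.log (a k)) * w k j :=
      fun j => by ring
    rw [Finset.sum_congr rfl fun j _ => this j, ← Finset.mul_sum, hrow, mul_one]
  have hsumT : ∑ k, ∑ j, T k j
      = (∑ k, a k * Real.log (a k)) - ∑ k, ∑ j, a k * w k j * Real.log (b j) := by
    calc ∑ k, ∑ j, T k j
        = ∑ k, ((∑ j, a k * w k j * Real.log (a k))
            - (∑ j, a k * w k j * Real.log (b j))) := by
          apply Finset.sum_congr rfl
          intro k _
          rw [← Finset.sum_sub_distrib]
          apply Finset.sum_congr rfl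
          intro j _
          rw [hT]; ring
      _ = _ := by
          rw [Finset.sum_sub_distrib]
          congr 1
          exact Finset.sum_congr rfl fun k _ => h3 k
  have hmain : 0 ≤ ∑ k, ∑ j, T k j := by
    rw [← hsumS]
    exact Finset.sum_le_sum fun k _ => Finset.sum_le_sum fun j _ => hTS k j
  constructor
  · linarith [hsumT, hmain]
  · intro heq k j hwne
    have hTeq0 : ∑ k, ∑ j, T k j = 0 := by rw [hsumT, heq]; ring
    have hptS : ∀ p : κ × κ, p ∈ (Finset.univ : Finset (κ × κ)) → S p.1 p.2 ≤ T p.1 p.2 :=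
      fun p _ => hTS p.1 p.2
    have hprod : ∑ p : κ × κ, T p.1 p.2 = ∑ p : κ × κ, S p.1 p.2 := by
      rw [Fintype.sum_prod_type, Fintype.sum_prod_type, hTeq0, hsumS]
    have hpt : ∀ p : κ × κ, p ∈ (Finset.univ : Finset (κ × κ)) → T p.1 p.2 = S p.1 p.2 :=
      fun p hp => ((Finset.sum_eq_sum_iff_of_le hptS).mp hprod.symm p hp).symm
    have heq2 : T k j = S k j := hpt (k, j) (Finset.mem_univ _)
    have hwpos : 0 < w k j := lt_of_le_of_ne (hw k j) (Ne.symm hwne)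
    rcases eq_or_lt_of_le (hb j) with hb0 | hbpos
    · have h0 := hsupp j hb0.symm k
      rcases mul_eq_zero.mp h0 with h | h
      · rw [h, ← hb0]
      · exact absurd h (ne_of_gt hwpos)
    rcases eq_or_lt_of_le (ha k) with ha0 | hapos
    · exfalso
      have hTv : T k j = 0 := by simp only [hT]; rw [← ha0]; ring
      have hSv : S k j = w k j * (0 - b j) := by simp only [hS]; rw [← ha0]
      rw [hTv, hSv] at heq2
      nlinarith [mul_pos hwpos hbpos]
    · by_contra hne
      have hx : b j / a k ≠ 1 := by
        intro h
        exact hne ((div_eq_one_iff_eq (ne_of_gt hapos)).mp h).symm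
      have hlog := Real.log_lt_sub_one_of_pos (by positivity : (0:ℝ) < b j / a k) hx
      rw [Real.log_div (ne_of_gt hbpos) (ne_of_gt hapos)] at hlog
      have h4 := (mul_lt_mul_iff_right₀ hapos).mpr hlog
      have hba : a k * (b j / a k - 1) = b j - a k := by field_simp
      rw [hba] at h4
      simp only [hT, hS] at heq2
      have h5 := (mul_lt_mul_iff_right₀ hwpos).mpr h4
      nlinarith [h5, heq2]

end Klein

section MatrixHelpers

lemma posSemidef_real_smul {c : ℝ} (hc : 0 ≤ c) {M : Matrix n n ℂ} (hM : M.PosSemidef) :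
    ((c:ℂ) • M).PosSemidef := by
  constructor
  · unfold Matrix.IsHermitian
    rw [Matrix.conjTranspose_smul, hM.1]
    congr 1
    simp [Complex.star_def, Complex.conj_ofReal]
  · exact (hM.smul (a := (c:ℂ)) (Complex.zero_le_real.mpr hc)).2

lemma posSemidef_sum {ι : Type*} (s : Finset ι) (f : ι → Matrix n n ℂ)
    (h : ∀ i ∈ s, (f i).PosSemidef) : (∑ i ∈ s, f i).PosSemidef := by
  classical
  induction s using Finset.induction_on with
  | empty => simpa using Matrix.PosSemidef.zero
  | @insert x s hx ih =>
    rw [Finset.sum_insert hx]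
    exact (h _ (Finset.mem_insert_self _ _)).add
      (ih fun i hi => h i (Finset.mem_insert_of_mem hi))

lemma unitary_sum_normSq_col {M : Matrix n n ℂ} (hM : M ∈ Matrix.unitaryGroup n ℂ) (k : n) :
    ∑ j, Complex.normSq (M j k) = 1 := by
  have h : star M * M = 1 := Matrix.mem_unitaryGroup_iff'.mp hM
  have h2 : (star M * M) k k = 1 := by rw [h]; simp
  rw [Matrix.mul_apply] at h2
  have h3 : ∑ j, ((Complex.normSq (M j k) : ℝ) : ℂ) = 1 := by
    rw [← h2]
    apply Finset.sum_congr rfl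
    intro j _
    rw [Matrix.star_apply]
    rw [Complex.star_def, ← Complex.normSq_eq_conj_mul_self]
  exact_mod_cast h3

lemma unitary_sum_normSq_row {M : Matrix n n ℂ} (hM : M ∈ Matrix.unitaryGroup n ℂ) (j : n) :
    ∑ k, Complex.normSq (M j k) = 1 := by
  have h : M * star M = 1 := Matrix.mem_unitaryGroup_iff.mp hM
  have h2 : (M * star M) j j = 1 := by rw [h]; simp
  rw [Matrix.mul_apply] at h2
  have h3 : ∑ k, ((Complex.normSq (M j k) : ℝ) : ℂ) = 1 := by
    rw [← h2]
    apply Finset.sum_congr rfl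
    intro k _
    rw [Matrix.star_apply]
    rw [Complex.star_def, Complex.mul_conj]
  exact_mod_cast h3

lemma mul_diag_mul_star_apply (M : Matrix n n ℂ) (d : n → ℂ) (j j' : n) :
    (M * Matrix.diagonal d * star M) j j' =
      ∑ k, M j k * d k * (starRingEnd ℂ) (M j' k) := by
  rw [Matrix.mul_apply]
  apply Finset.sum_congr rfl
  intro k _
  rw [Matrix.mul_diagonal, Matrix.star_apply, Complex.star_def]

end MatrixHelpers

lemma shannonEntropy_eq_natEnt {α : Type*} [Fintype α] (g : α → ℝ) :
    shannonEntropy g = (-∑ i, g i * Real.log (g i)) / Real.log 2 := by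
  unfold shannonEntropy Real.logb
  rw [neg_div, Finset.sum_div]
  congr 1
  apply Finset.sum_congr rfl
  intro i _
  ring

lemma specEnt_concavity {ι : Type*} [Fintype ι] (q : ι → ℝ) (hq : ∀ i, 0 ≤ q i)
    (hq1 : ∑ i, q i = 1) (ρ : ι → Matrix n n ℂ)
    (hPSD : ∀ i, (ρ i).PosSemidef) (htr : ∀ i, (ρ i).trace = 1) :
    (∑ i, q i * specEnt (ρ i)) ≤ specEnt (∑ i, (q i : ℂ) • ρ i) ∧
    ((∑ i, q i * specEnt (ρ i)) = specEnt (∑ i, (q i : ℂ) • ρ i) →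
      ∀ i, 0 < q i → ρ i = ∑ i', (q i' : ℂ) • ρ i') := by
  have hlog2 : (0:ℝ) < Real.log 2 := Real.log_pos (by norm_num)
  set B : Matrix n n ℂ := ∑ i, (q i : ℂ) • ρ i with hBdef
  have hBpsd : B.PosSemidef :=
    posSemidef_sum _ _ fun i _ => posSemidef_real_smul (hq i) (hPSD i)
  have hBH := hBpsd.1
  have hBtr : B.trace = 1 := by
    rw [hBdef, Matrix.trace_sum]
    simp only [Matrix.trace_smul, htr, smul_eq_mul, mul_one]
    exact_mod_cast hq1
  set V : Matrix n n ℂ := (hBH.eigenvectorUnitary : Matrix n n ℂ) with hVdef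
  have hVmem : V ∈ Matrix.unitaryGroup n ℂ := (hBH.eigenvectorUnitary).2
  set b : n → ℝ := hBH.eigenvalues with hbdef
  have hbnn : ∀ j, 0 ≤ b j := hBpsd.eigenvalues_nonneg
  have hb1 : ∑ j, b j = 1 := sum_eigenvalues_eq_one hBH hBtr
  have hdiagB : star V * B * V = Matrix.diagonal (fun j => ((b j : ℝ) : ℂ)) :=
    by
      have := hBH.conjStarAlgAut_star_eigenvectorUnitary
      rw [Unitary.conjStarAlgAut_star_apply] at this
      exact this
  set U : ι → Matrix n n ℂ := fun i => ((hPSD i).1.eigenvectorUnitary : Matrix n n ℂ)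
    with hUdef
  set a : ι → n → ℝ := fun i => (hPSD i).1.eigenvalues with hadef
  have hann : ∀ i k, 0 ≤ a i k := fun i => (hPSD i).eigenvalues_nonneg
  have ha1 : ∀ i, ∑ k, a i k = 1 := fun i => sum_eigenvalues_eq_one (hPSD i).1 (htr i)
  set M : ι → Matrix n n ℂ := fun i => star V * U i with hMdef
  have hVstar : star V ∈ Matrix.unitaryGroup n ℂ := by
    rw [Matrix.mem_unitaryGroup_iff, star_star]
    exact Matrix.mem_unitaryGroup_iff'.mp hVmem
  have hMmem : ∀ i, M i ∈ Matrix.unitaryGroup n ℂ := fun i =>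
    mul_mem hVstar ((hPSD i).1.eigenvectorUnitary).2
  set w : ι → n → n → ℝ := fun i k j => Complex.normSq (M i j k) with hwdef
  have hwnn : ∀ i k j, 0 ≤ w i k j := fun i k j => Complex.normSq_nonneg _
  have hrow : ∀ i k, ∑ j, w i k j = 1 := fun i k => unitary_sum_normSq_col (hMmem i) k
  have hcol : ∀ i j, ∑ k, w i k j = 1 := fun i j => unitary_sum_normSq_row (hMmem i) j
  have hentry : ∀ i j j', (star V * ρ i * V) j j' =
      ∑ k, M i j k * ((a i k : ℝ) : ℂ) * (starRingEnd ℂ) (M i j' k) := by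
    intro i j j'
    have hM' : M i = star V * U i := rfl
    have hsp : star V * ρ i * V =
        M i * Matrix.diagonal (fun k => ((a i k : ℝ) : ℂ)) * star (M i) := by
      have hU' : ρ i = U i * Matrix.diagonal (fun k => ((a i k : ℝ) : ℂ)) * star (U i) :=
        (hPSD i).1.spectral_theorem
      rw [hU', hM', Matrix.star_mul, star_star]
      simp only [Matrix.mul_assoc]
    rw [hsp, mul_diag_mul_star_apply]
  have hdiag_real : ∀ i j, (star V * ρ i * V) j j = ((∑ k, a i k * w i k j : ℝ) : ℂ) := by
    intro i j
    rw [hentry]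
    push_cast
    apply Finset.sum_congr rfl
    intro k _
    rw [mul_comm (M i j k), mul_assoc, Complex.mul_conj]
  have hagg : ∀ j, b j = ∑ i, q i * (∑ k, a i k * w i k j) := by
    intro j
    have h0 : (star V * B * V) j j = ((b j : ℝ) : ℂ) := by
      rw [hdiagB, Matrix.diagonal_apply_eq]
    have h1 : star V * B * V = ∑ i, (q i : ℂ) • (star V * ρ i * V) := by
      rw [hBdef, Matrix.mul_sum, Matrix.sum_mul]
      apply Finset.sum_congr rfl
      intro i _
      rw [Matrix.mul_smul, Matrix.smul_mul]
    have h2 : ((b j : ℝ) : ℂ) = ∑ i, (q i : ℂ) * ((∑ k, a i k * w i k j : ℝ) : ℂ) := by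
      rw [← h0, h1, Matrix.sum_apply]
      apply Finset.sum_congr rfl
      intro i _
      rw [Matrix.smul_apply, hdiag_real, smul_eq_mul]
    exact_mod_cast h2
  have hsupp : ∀ i, 0 < q i → ∀ j, b j = 0 → ∀ k, a i k * w i k j = 0 := by
    intro i hqi j hbj
    have hnn : ∀ i', 0 ≤ q i' * (∑ k, a i' k * w i' k j) := fun i' =>
      mul_nonneg (hq i') (Finset.sum_nonneg fun k _ => mul_nonneg (hann i' k) (hwnn i' k j))
    have hzero : ∑ i', q i' * (∑ k, a i' k * w i' k j) = 0 := by rw [← hagg j, hbj]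
    have hterm := (Finset.sum_eq_zero_iff_of_nonneg (fun i' _ => hnn i')).mp hzero i
      (Finset.mem_univ i)
    have hsum0 : ∑ k, a i k * w i k j = 0 := by
      rcases mul_eq_zero.mp hterm with h | h
      · exact absurd h (ne_of_gt hqi)
      · exact h
    intro k
    exact (Finset.sum_eq_zero_iff_of_nonneg
      (fun k _ => mul_nonneg (hann i k) (hwnn i k j))).mp hsum0 k (Finset.mem_univ k)
  -- Klein per i with positive weight
  have hklein : ∀ i, 0 < q i →
      (∑ k, ∑ j, a i k * w i k j * Real.log (b j)) ≤ (∑ k, a i k * Real.log (a i k)) ∧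
      ((∑ k, ∑ j, a i k * w i k j * Real.log (b j)) = (∑ k, a i k * Real.log (a i k)) →
        ∀ k j, w i k j ≠ 0 → a i k = b j) := by
    intro i hqi
    exact real_klein (a i) b (fun k j => w i k j) (hann i) hbnn (fun k j => hwnn i k j)
      (hrow i) (hcol i) (ha1 i) hb1 (fun j hbj k => hsupp i hqi j hbj k)
  -- L i and X i
  set L : ι → ℝ := fun i => ∑ k, ∑ j, a i k * w i k j * Real.log (b j) with hLdef
  set X : ι → ℝ := fun i => ∑ k, a i k * Real.log (a i k) with hXdef
  have hLX : ∀ i, 0 < q i → L i ≤ X i := fun i hqi => (hklein i hqi).1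
  have hbLsum : ∑ j, b j * Real.log (b j) = ∑ i, q i * L i := by
    calc ∑ j, b j * Real.log (b j)
        = ∑ j, (∑ i, q i * (∑ k, a i k * w i k j)) * Real.log (b j) := by
          apply Finset.sum_congr rfl
          intro j _
          rw [← hagg j]
      _ = ∑ j, ∑ i, q i * ((∑ k, a i k * w i k j) * Real.log (b j)) := by
          apply Finset.sum_congr rfl
          intro j _
          rw [Finset.sum_mul]
          apply Finset.sum_congr rfl
          intro i _
          ring
      _ = ∑ i, ∑ j, q i * ((∑ k, a i k * w i k j) * Real.log (b j)) := Finset.sum_comm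
      _ = ∑ i, q i * L i := by
          apply Finset.sum_congr rfl
          intro i _
          rw [← Finset.mul_sum]
          congr 1
          have hstep : ∀ j, (∑ k, a i k * w i k j) * Real.log (b j)
              = ∑ k, a i k * w i k j * Real.log (b j) := fun j => by
            rw [Finset.sum_mul]
          rw [Finset.sum_congr rfl fun j _ => hstep j]
          exact Finset.sum_comm
  have hqLX : ∑ i, q i * L i ≤ ∑ i, q i * X i := by
    apply Finset.sum_le_sum
    intro i _
    rcases eq_or_lt_of_le (hq i) with h0 | hqi
    · rw [← h0]; ring_nf; exact le_refl _
    · exact mul_le_mul_of_nonneg_left (hLX i hqi) (le_of_lt hqi)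
  have hspecB : specEnt B = (-∑ j, b j * Real.log (b j)) / Real.log 2 := by
    rw [specEnt_hermitian hBH, shannonEntropy_eq_natEnt]
  have hspecRho : ∀ i, specEnt (ρ i) = (-(X i)) / Real.log 2 := by
    intro i
    rw [specEnt_hermitian (hPSD i).1, shannonEntropy_eq_natEnt, hXdef]
  have hsumspec : ∑ i, q i * specEnt (ρ i) = (-(∑ i, q i * X i)) / Real.log 2 := by
    have hterm : ∀ i, q i * specEnt (ρ i) = -(q i * X i) / Real.log 2 := by
      intro i
      rw [hspecRho i]
      ring
    rw [Finset.sum_congr rfl fun i _ => hterm i, ← Finset.sum_div]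
    congr 1
    exact Finset.sum_neg_distrib _
  have hqle : ∀ i' ∈ Finset.univ, q i' * L i' ≤ q i' * X i' := by
    intro i' _
    rcases eq_or_lt_of_le (hq i') with h0 | hqi'
    · rw [← h0]
      simp
    · exact mul_le_mul_of_nonneg_left (hLX i' hqi') (le_of_lt hqi')
  constructor
  · rw [hspecB, hsumspec]
    have hnum : (-(∑ i, q i * X i)) ≤ -∑ j, b j * Real.log (b j) := by
      have := hqLX
      rw [hbLsum]
      linarith
    exact (div_le_div_iff_of_pos_right hlog2).mpr hnum
  · intro heq i hqi
    have hXL : ∑ i', q i' * L i' = ∑ i', q i' * X i' := by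
      rw [hspecB, hsumspec] at heq
      have h0 : (-(∑ i', q i' * X i')) = -∑ j, b j * Real.log (b j) := by
        have h := congrArg (fun t => t * Real.log 2) heq
        rwa [div_mul_cancel₀ _ (ne_of_gt hlog2), div_mul_cancel₀ _ (ne_of_gt hlog2)] at h
      rw [hbLsum] at h0
      linarith
    have hptwise := (Finset.sum_eq_sum_iff_of_le hqle).mp hXL
    have hLXi : L i = X i :=
      mul_left_cancel₀ (ne_of_gt hqi) (hptwise i (Finset.mem_univ i))
    have hab := (hklein i hqi).2 hLXi
    -- reconstruction: ρ i = B
    have hMM1 : M i * star (M i) = 1 := Matrix.mem_unitaryGroup_iff.mp (hMmem i)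
    have hstep : star V * ρ i * V = star V * B * V := by
      rw [hdiagB]
      ext j j'
      rw [hentry i j j']
      have hsum : ∑ k, M i j k * ((a i k : ℝ) : ℂ) * (starRingEnd ℂ) (M i j' k)
          = ((b j : ℝ) : ℂ) * ∑ k, M i j k * (starRingEnd ℂ) (M i j' k) := by
        rw [Finset.mul_sum]
        apply Finset.sum_congr rfl
        intro k _
        by_cases h0 : M i j k = 0
        · rw [h0]
          ring
        · have hwne : w i k j ≠ 0 := by
            simpa [hwdef] using (Complex.normSq_pos.mpr h0).ne'
          rw [hab k j hwne]
          ring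
      rw [hsum]
      have hone : ∑ k, M i j k * (starRingEnd ℂ) (M i j' k) = (1 : Matrix n n ℂ) j j' := by
        rw [← hMM1, Matrix.mul_apply]
        apply Finset.sum_congr rfl
        intro k _
        rw [Matrix.star_apply, Complex.star_def]
      rw [hone, Matrix.one_apply, Matrix.diagonal_apply]
      split_ifs with h
      · rw [h]
        ring
      · ring
    have hVV : V * star V = 1 := Matrix.mem_unitaryGroup_iff.mp hVmem
    have hcan : V * (star V * ρ i * V) * star V = V * (star V * B * V) * star V := by
      rw [hstep]
    calc ρ i = 1 * ρ i * 1 := by rw [Matrix.one_mul, Matrix.mul_one]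
      _ = (V * star V) * ρ i * (V * star V) := by rw [hVV]
      _ = V * (star V * ρ i * V) * star V := by simp only [Matrix.mul_assoc]
      _ = V * (star V * B * V) * star V := hcan
      _ = (V * star V) * B * (V * star V) := by simp only [Matrix.mul_assoc]
      _ = B := by rw [hVV, Matrix.one_mul, Matrix.mul_one]

lemma vonNeumannEntropy_eq_specEnt {A : Matrix n n ℂ} (hA : A.IsHermitian) :
    vonNeumannEntropy A = specEnt A := by
  rw [vonNeumannEntropy, dif_pos hA, specEnt_hermitian hA]

end MarkovTFAE

open MarkovTFAE

/-- for a ccq-state `ρ_{XYR} = Σ_{x,y} P(x,y) |x⟩⟨x| ⊗ |y⟩⟨y| ⊗ ρ^{x,y}`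
the Markov-chain condition `X ↔ Y ↔ R` is equivalent to each of the entropic
conditions `S(X|YR) = H(X|Y)`, `S(R|YX) = S(R|Y)` and `S(X;YR) = I(X;Y)`. -/
theorem markov_chain_tfae
    {𝒳 𝒴 : Type*} [Fintype 𝒳] [Fintype 𝒴] [DecidableEq 𝒳] [DecidableEq 𝒴] {d : ℕ}
    (P : 𝒳 × 𝒴 → ℝ) (hP0 : ∀ p, 0 ≤ P p) (hP1 : ∑ p, P p = 1)
    (ρ : 𝒳 × 𝒴 → Matrix (Fin d) (Fin d) ℂ)
    (hρ : ∀ p, 0 < P p → IsDensityMatrix (ρ p)) :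
    List.TFAE
      [ -- (1) Markov chain X ↔ Y ↔ R : the quantum register depends only on y
        (∃ σ : 𝒴 → Matrix (Fin d) (Fin d) ℂ, (∀ y, IsDensityMatrix (σ y)) ∧
          ∀ x y, 0 < P (x, y) → ρ (x, y) = σ y),
        -- (2) S(X|YR) = H(X|Y), i.e. S(ρ_{XYR}) − S(ρ_{YR}) = H(X,Y) − H(Y)
        vonNeumannEntropy (Matrix.blockDiagonal fun p : 𝒳 × 𝒴 => (P p : ℂ) • ρ p) -
            vonNeumannEntropy
              (Matrix.blockDiagonal fun y : 𝒴 => ∑ x, (P (x, y) : ℂ) • ρ (x, y)) =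
          shannonEntropy P - shannonEntropy (fun y => ∑ x, P (x, y)),
        -- (3) S(R|YX) = S(R|Y), i.e. S(ρ_{XYR}) − H(X,Y) = S(ρ_{YR}) − H(Y)
        vonNeumannEntropy (Matrix.blockDiagonal fun p : 𝒳 × 𝒴 => (P p : ℂ) • ρ p) -
            shannonEntropy P =
          vonNeumannEntropy
              (Matrix.blockDiagonal fun y : 𝒴 => ∑ x, (P (x, y) : ℂ) • ρ (x, y)) -
            shannonEntropy (fun y => ∑ x, P (x, y)),
        -- (4) S(X;YR) = I(X;Y)
        shannonEntropy (fun x => ∑ y, P (x, y)) +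
            vonNeumannEntropy
              (Matrix.blockDiagonal fun y : 𝒴 => ∑ x, (P (x, y) : ℂ) • ρ (x, y)) -
            vonNeumannEntropy (Matrix.blockDiagonal fun p : 𝒳 × 𝒴 => (P p : ℂ) • ρ p) =
          shannonEntropy (fun x => ∑ y, P (x, y)) +
            shannonEntropy (fun y => ∑ x, P (x, y)) - shannonEntropy P ] := by

  classical
  set t : 𝒴 → ℝ := fun y => ∑ x, P (x, y) with htdef
  set τ : 𝒴 → Matrix (Fin d) (Fin d) ℂ := fun y => ∑ x, (P (x, y) : ℂ) • ρ (x, y) with hτdef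
  have htnn : ∀ y, 0 ≤ t y := fun y => Finset.sum_nonneg fun x _ => hP0 (x, y)
  have hblockPSD : ∀ p, ((P p : ℂ) • ρ p).PosSemidef := by
    intro p
    rcases eq_or_lt_of_le (hP0 p) with h0 | hpos
    · rw [← h0]
      simpa using Matrix.PosSemidef.zero
    · exact posSemidef_real_smul (hP0 p) (hρ p hpos).1
  have hτPSD : ∀ y, (τ y).PosSemidef := fun y =>
    posSemidef_sum _ _ fun x _ => hblockPSD (x, y)
  have hτtr : ∀ y, (τ y).trace = ((t y : ℝ) : ℂ) := by
    intro y
    simp only [hτdef, htdef, Matrix.trace_sum, Matrix.trace_smul, smul_eq_mul]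
    push_cast
    apply Finset.sum_congr rfl
    intro x _
    rcases eq_or_lt_of_le (hP0 (x, y)) with h0 | hpos
    · rw [← h0]
      simp
    · rw [(hρ (x, y) hpos).2, mul_one]
  -- entropy of the full block matrix
  have hEterm : ∀ p, specEnt ((P p : ℂ) • ρ p)
      = P p * specEnt (ρ p) - P p * Real.logb 2 (P p) := by
    intro p
    rcases eq_or_lt_of_le (hP0 p) with h0 | hpos
    · have hz : ((P p : ℂ) • ρ p) = 0 := by rw [← h0]; simp
      rw [hz, specEnt_zero, ← h0]
      ring
    · exact specEnt_real_smul (hP0 p) (hρ p hpos).1 (hρ p hpos).2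
  have hE : specEnt (Matrix.blockDiagonal fun p : 𝒳 × 𝒴 => (P p : ℂ) • ρ p)
      = (∑ p, P p * specEnt (ρ p)) + shannonEntropy P := by
    rw [specEnt_blockDiagonal, Finset.sum_congr rfl fun p _ => hEterm p,
      Finset.sum_sub_distrib, shannonEntropy]
    ring
  have hF : specEnt (Matrix.blockDiagonal τ) = ∑ y, specEnt (τ y) :=
    specEnt_blockDiagonal τ
  have hherm1 : (Matrix.blockDiagonal fun p : 𝒳 × 𝒴 => (P p : ℂ) • ρ p).IsHermitian :=
    isHermitian_blockDiagonal _ fun p => (hblockPSD p).1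
  have hherm2 : (Matrix.blockDiagonal τ).IsHermitian :=
    isHermitian_blockDiagonal _ fun y => (hτPSD y).1
  have hv1 : vonNeumannEntropy (Matrix.blockDiagonal fun p : 𝒳 × 𝒴 => (P p : ℂ) • ρ p)
      = specEnt (Matrix.blockDiagonal fun p : 𝒳 × 𝒴 => (P p : ℂ) • ρ p) :=
    vonNeumannEntropy_eq_specEnt hherm1
  have hv2 : vonNeumannEntropy (Matrix.blockDiagonal τ) = specEnt (Matrix.blockDiagonal τ) :=
    vonNeumannEntropy_eq_specEnt hherm2
  -- default density matrix
  obtain ⟨p0, hp0⟩ : ∃ p, 0 < P p := by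
    by_contra h
    push_neg at h
    have hz : ∀ p, P p = 0 := fun p => le_antisymm (h p) (hP0 p)
    rw [Finset.sum_congr rfl fun p _ => hz p] at hP1
    simp at hP1
  have hd : (0:ℝ) < (d : ℝ) := by
    have h1 := (hρ p0 hp0).2
    rcases Nat.eq_zero_or_pos d with h0 | hpos
    · exfalso
      subst h0
      rw [Matrix.trace] at h1
      simp at h1
    · exact_mod_cast hpos
  set dflt : Matrix (Fin d) (Fin d) ℂ := (((d:ℝ)⁻¹ : ℝ) : ℂ) • 1 with hdfltdef
  have hdflt : IsDensityMatrix dflt := by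
    constructor
    · exact posSemidef_real_smul (inv_nonneg.mpr hd.le) Matrix.PosSemidef.one
    · rw [hdfltdef, Matrix.trace_smul, Matrix.trace_one, smul_eq_mul, Fintype.card_fin]
      have hdne : (d:ℝ) ≠ 0 := ne_of_gt hd
      have hdneC : (d:ℂ) ≠ 0 := by exact_mod_cast hdne
      push_cast
      field_simp
  -- normalized conditional states
  set σ : 𝒴 → Matrix (Fin d) (Fin d) ℂ := fun y => (((t y)⁻¹ : ℝ) : ℂ) • τ y with hσdef
  have hσdens : ∀ y, 0 < t y → IsDensityMatrix (σ y) := by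
    intro y hty
    constructor
    · exact posSemidef_real_smul (inv_nonneg.mpr (htnn y)) (hτPSD y)
    · rw [hσdef]
      simp only [Matrix.trace_smul, hτtr y, smul_eq_mul]
      push_cast
      field_simp
  have hτσ : ∀ y, 0 < t y → τ y = ((t y : ℝ) : ℂ) • σ y := by
    intro y hty
    have h1 : ((t y : ℝ) : ℂ) * (((t y)⁻¹ : ℝ) : ℂ) = 1 := by
      push_cast
      field_simp
    rw [hσdef, smul_smul, h1, one_smul]
  have hτspec : ∀ y, 0 < t y →
      specEnt (τ y) = t y * specEnt (σ y) - t y * Real.logb 2 (t y) := by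
    intro y hty
    rw [hτσ y hty]
    exact specEnt_real_smul (htnn y) (hσdens y hty).1 (hσdens y hty).2
  have ht0P : ∀ y, t y = 0 → ∀ x, P (x, y) = 0 := by
    intro y h x
    exact (Finset.sum_eq_zero_iff_of_nonneg (fun x _ => hP0 (x, y))).mp h x (Finset.mem_univ x)
  have hτ0 : ∀ y, t y = 0 → τ y = 0 := by
    intro y h
    rw [hτdef]
    apply Finset.sum_eq_zero
    intro x _
    rw [ht0P y h x]
    simp
  -- key per-y concavity statement
  have hkey : ∀ y, 0 < t y →
      ((∑ x, P (x, y) * specEnt (ρ (x, y))) ≤ t y * specEnt (σ y) ∧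
       ((∑ x, P (x, y) * specEnt (ρ (x, y))) = t y * specEnt (σ y) →
         ∀ x, 0 < P (x, y) → ρ (x, y) = σ y)) := by
    intro y hty
    set q : 𝒳 → ℝ := fun x => P (x, y) / t y with hqdef
    set ρ' : 𝒳 → Matrix (Fin d) (Fin d) ℂ :=
      fun x => if 0 < P (x, y) then ρ (x, y) else σ y with hρ'def
    have hq : ∀ x, 0 ≤ q x := fun x => div_nonneg (hP0 _) (htnn y)
    have hq1 : ∑ x, q x = 1 := by
      simp only [hqdef]
      rw [← Finset.sum_div]
      exact div_self (ne_of_gt hty)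
    have hρ'x : ∀ x, ρ' x = if 0 < P (x, y) then ρ (x, y) else σ y := fun x => rfl
    have hPSD' : ∀ x, (ρ' x).PosSemidef := by
      intro x
      rw [hρ'x x]
      by_cases hx : 0 < P (x, y)
      · rw [if_pos hx]; exact (hρ _ hx).1
      · rw [if_neg hx]; exact (hσdens y hty).1
    have htr' : ∀ x, (ρ' x).trace = 1 := by
      intro x
      rw [hρ'x x]
      by_cases hx : 0 < P (x, y)
      · rw [if_pos hx]; exact (hρ _ hx).2
      · rw [if_neg hx]; exact (hσdens y hty).2
    have hconv := specEnt_concavity q hq hq1 ρ' hPSD' htr'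
    have hqx' : ∀ x, q x = P (x, y) / t y := fun x => rfl
    have hBσ : (∑ x, ((q x : ℝ) : ℂ) • ρ' x) = σ y := by
      have hσy : σ y = (((t y)⁻¹ : ℝ) : ℂ) • τ y := rfl
      have hτy : τ y = ∑ x, (P (x, y) : ℂ) • ρ (x, y) := rfl
      rw [hσy, hτy, Finset.smul_sum]
      apply Finset.sum_congr rfl
      intro x _
      by_cases hx : 0 < P (x, y)
      · rw [hρ'x x, if_pos hx, hqx' x, smul_smul]
        congr 1
        push_cast
        ring
      · have hx0 : P (x, y) = 0 := le_antisymm (not_lt.mp hx) (hP0 _)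
        rw [hρ'x x, if_neg hx, hqx' x, hx0]
        simp
    rw [hBσ] at hconv
    have hsum : ∑ x, P (x, y) * specEnt (ρ (x, y)) = t y * ∑ x, q x * specEnt (ρ' x) := by
      rw [Finset.mul_sum]
      apply Finset.sum_congr rfl
      intro x _
      rw [hρ'x x]
      by_cases hx : 0 < P (x, y)
      · rw [if_pos hx, hqx' x]
        field_simp
      · have hx0 : P (x, y) = 0 := le_antisymm (not_lt.mp hx) (hP0 _)
        rw [hqx' x, hx0]
        simp
    constructor
    · rw [hsum]
      exact mul_le_mul_of_nonneg_left hconv.1 (le_of_lt hty)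
    · intro heq x hx
      have heq2 : ∑ x, q x * specEnt (ρ' x) = specEnt (σ y) := by
        rw [hsum] at heq
        exact mul_left_cancel₀ (ne_of_gt hty) heq
      have hqx : 0 < q x := by
        rw [hqx' x]
        exact div_pos hx hty
      have hval := hconv.2 heq2 x hqx
      have hvx : ρ' x = ρ (x, y) := by
        rw [hρ'x x, if_pos hx]
      rw [← hvx]
      exact hval
  -- per-y inequality in final form
  have hgapnn : ∀ y, (∑ x, P (x, y) * specEnt (ρ (x, y)))
      ≤ specEnt (τ y) + t y * Real.logb 2 (t y) := by
    intro y
    rcases eq_or_lt_of_le (htnn y) with h0 | hty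
    · have h0' := h0.symm
      have hz : ∀ x, P (x, y) * specEnt (ρ (x, y)) = 0 := fun x => by
        rw [ht0P y h0' x]; ring
      rw [Finset.sum_congr rfl fun x _ => hz x, hτ0 y h0', specEnt_zero, h0']
      simp
    · rw [hτspec y hty]
      have := (hkey y hty).1
      linarith
  have hswap : ∑ y, ∑ x, P (x, y) * specEnt (ρ (x, y)) = ∑ p, P p * specEnt (ρ p) := by
    rw [Fintype.sum_prod_type]
    exact Finset.sum_comm
  have hSY : shannonEntropy t = -∑ y, t y * Real.logb 2 (t y) := rfl
  have main : (∃ σ0 : 𝒴 → Matrix (Fin d) (Fin d) ℂ, (∀ y, IsDensityMatrix (σ0 y)) ∧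
        ∀ x y, 0 < P (x, y) → ρ (x, y) = σ0 y) ↔
      specEnt (Matrix.blockDiagonal fun p : 𝒳 × 𝒴 => (P p : ℂ) • ρ p) -
        specEnt (Matrix.blockDiagonal τ) = shannonEntropy P - shannonEntropy t := by
    constructor
    · rintro ⟨σ0, hσ0d, hσ0⟩
      have hFy : ∀ y, specEnt (τ y)
          = (∑ x, P (x, y) * specEnt (ρ (x, y))) - t y * Real.logb 2 (t y) := by
        intro y
        rcases eq_or_lt_of_le (htnn y) with h0 | hty
        · have h0' := h0.symm
          have hz : ∀ x, P (x, y) * specEnt (ρ (x, y)) = 0 := fun x => by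
            rw [ht0P y h0' x]; ring
          rw [hτ0 y h0', specEnt_zero, Finset.sum_congr rfl fun x _ => hz x, h0']
          simp
        · have hτeq : τ y = ((t y : ℝ) : ℂ) • σ0 y := by
            have hτy : τ y = ∑ x, (P (x, y) : ℂ) • ρ (x, y) := rfl
            rw [hτy]
            have hz : ∀ x, (P (x, y) : ℂ) • ρ (x, y) = (P (x, y) : ℂ) • σ0 y := by
              intro x
              by_cases hx : 0 < P (x, y)
              · rw [hσ0 x y hx]
              · have hx0 : P (x, y) = 0 := le_antisymm (not_lt.mp hx) (hP0 _)
                rw [hx0]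
                simp
            rw [Finset.sum_congr rfl fun x _ => hz x, ← Finset.sum_smul]
            congr 1
            rw [htdef]
            push_cast
            rfl
          have hsum2 : ∑ x, P (x, y) * specEnt (ρ (x, y)) = t y * specEnt (σ0 y) := by
            have hz : ∀ x, P (x, y) * specEnt (ρ (x, y)) = P (x, y) * specEnt (σ0 y) := by
              intro x
              by_cases hx : 0 < P (x, y)
              · rw [hσ0 x y hx]
              · have hx0 : P (x, y) = 0 := le_antisymm (not_lt.mp hx) (hP0 _)
                rw [hx0]
                ring
            rw [Finset.sum_congr rfl fun x _ => hz x, ← Finset.sum_mul]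
          rw [hτeq, specEnt_real_smul (htnn y) (hσ0d y).1 (hσ0d y).2, hsum2]
      have hFtot : specEnt (Matrix.blockDiagonal τ)
          = (∑ p, P p * specEnt (ρ p)) + shannonEntropy t := by
        rw [hF, Finset.sum_congr rfl fun y _ => hFy y, Finset.sum_sub_distrib, hswap, hSY]
        ring
      rw [hE, hFtot]
      ring
    · intro h2
      have hFtot : specEnt (Matrix.blockDiagonal τ)
          = (∑ p, P p * specEnt (ρ p)) + shannonEntropy t := by
        rw [hE] at h2
        linarith
      set g : 𝒴 → ℝ := fun y => specEnt (τ y) + t y * Real.logb 2 (t y)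
          - ∑ x, P (x, y) * specEnt (ρ (x, y)) with hgdef
      have hgnn : ∀ y, 0 ≤ g y := by
        intro y
        simp only [hgdef]
        linarith [hgapnn y]
      have hgsum : ∑ y, g y = 0 := by
        simp only [hgdef]
        have e1 : ∑ y, specEnt (τ y) = (∑ p, P p * specEnt (ρ p)) + shannonEntropy t := by
          rw [← hF]
          exact hFtot
        have e2 : ∑ y, t y * Real.logb 2 (t y) = - shannonEntropy t := by
          rw [hSY]
          ring
        rw [Finset.sum_sub_distrib, Finset.sum_add_distrib, hswap, e1, e2]
        ring
      have hgzero : ∀ y, g y = 0 := fun y =>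
        (Finset.sum_eq_zero_iff_of_nonneg (fun y _ => hgnn y)).mp hgsum y (Finset.mem_univ y)
      refine ⟨fun y => if h : 0 < t y then σ y else dflt, ?_, ?_⟩
      · intro y
        show IsDensityMatrix (if _ : 0 < t y then σ y else dflt)
        by_cases h : 0 < t y
        · rw [dif_pos h]
          exact hσdens y h
        · rw [dif_neg h]
          exact hdflt
      · intro x y hxy
        have hty : 0 < t y := lt_of_lt_of_le hxy
          (Finset.single_le_sum (fun x _ => hP0 (x, y)) (Finset.mem_univ x))
        show ρ (x, y) = if _ : 0 < t y then σ y else dflt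
        rw [dif_pos hty]
        apply (hkey y hty).2 _ x hxy
        have hg0 := hgzero y
        simp only [hgdef] at hg0
        rw [hτspec y hty] at hg0
        linarith
  tfae_have 1 ↔ 2 := by
    rw [hv1, hv2]
    exact main
  tfae_have 2 ↔ 3 := by
    constructor <;> intro h <;> linarith
  tfae_have 2 ↔ 4 := by
    constructor <;> intro h <;> linarith
  tfae_finish


end
end

section
/- Let P be a non-trivial probability mass function on a finite set 𝒳×𝒴, i.e. H(X↘Y | Y) > 0 for (X,Y) ~ P. Let ψ₀ := Σ_{x,y} √(P(x,y)) |x⟩⊗|y⟩ ∈ ℂ^𝒳 ⊗ ℂ^𝒴 be the canonical embedding of P, with reduced density matrices ρ_A := tr_B|ψ₀⟩⟨ψ₀| and ρ_B := tr_A|ψ₀⟩⟨ψ₀|. Then S(X↘Y | B) > 0 and S(Y↘X | A) > 0; that is, the canonical embedding of a non-trivial primitive is a non-trivial embedding. -/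
open scoped BigOperators
open Matrix
open scoped ComplexOrder

attribute [local instance 10] Classical.propDecidable

noncomputable section

/-- Rank-one outer product `|φ⟩⟨φ|`. -/
def outer {n : Type*} (φ : n → ℂ) : Matrix n n ℂ :=
  fun i j => φ i * (starRingEnd ℂ) (φ j)

variable {𝒳 𝒴 : Type*} [Fintype 𝒳] [Fintype 𝒴] [DecidableEq 𝒳] [DecidableEq 𝒴]

/-- Marginal of `X`. -/
def margX (P : 𝒳 × 𝒴 → ℝ) (x : 𝒳) : ℝ := ∑ y, P (x, y)

/-- Marginal of `Y`. -/
def margY (P : 𝒳 × 𝒴 → ℝ) (y : 𝒴) : ℝ := ∑ x, P (x, y)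

/-- `f_X(x) = P_{Y|X=x}`, the conditional distribution of `Y` given `X = x`. -/
def condYX (P : 𝒳 × 𝒴 → ℝ) (x : 𝒳) : 𝒴 → ℝ := fun y => P (x, y) / margX P x

/-- `f_Y(y) = P_{X|Y=y}`, the conditional distribution of `X` given `Y = y`. -/
def condXY (P : 𝒳 × 𝒴 → ℝ) (y : 𝒴) : 𝒳 → ℝ := fun x => P (x, y) / margY P y

/-- `H(X↘Y | Y)`: the classical base-2 conditional Shannon entropy of the dependent
part `X↘Y = f_X(X)` given `Y`, written by grouping the values of `X` into the fibres
of `f_X = condYX P`. -/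
def depCondEntropyX (P : 𝒳 × 𝒴 → ℝ) : ℝ :=
  -∑ p : 𝒳 × 𝒴, P p *
    Real.logb 2
      ((∑ x' ∈ Finset.univ.filter fun x' => condYX P x' = condYX P p.1, P (x', p.2)) /
        margY P p.2)

/-- `H(Y↘X | X)`, symmetrically. -/
def depCondEntropyY (P : 𝒳 × 𝒴 → ℝ) : ℝ :=
  -∑ p : 𝒳 × 𝒴, P p *
    Real.logb 2
      ((∑ y' ∈ Finset.univ.filter fun y' => condXY P y' = condXY P p.2, P (p.1, y')) /
        margX P p.1)

/-- Alice's vector `φ_x = Σ_y √(P_{Y|X=x}(y)) |y⟩`. -/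
def phiX (P : 𝒳 × 𝒴 → ℝ) (x : 𝒳) : 𝒴 → ℂ := fun y => (Real.sqrt (condYX P x y) : ℂ)

/-- Bob's vector `φ_y = Σ_x √(P_{X|Y=y}(x)) |x⟩`. -/
def phiY (P : 𝒳 × 𝒴 → ℝ) (y : 𝒴) : 𝒳 → ℂ := fun x => (Real.sqrt (condXY P y x) : ℂ)

/-- Bob's reduced density matrix of the canonical embedding:
`ρ_B = Σ_x P_X(x) |φ_x⟩⟨φ_x|`. -/
def rhoB (P : 𝒳 × 𝒴 → ℝ) : Matrix 𝒴 𝒴 ℂ :=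
  ∑ x, (margX P x : ℂ) • outer (phiX P x)

/-- Alice's reduced density matrix `ρ_A = Σ_y P_Y(y) |φ_y⟩⟨φ_y|`. -/
def rhoA (P : 𝒳 × 𝒴 → ℝ) : Matrix 𝒳 𝒳 ℂ :=
  ∑ y, (margY P y : ℂ) • outer (phiY P y)

/-- The cq-state `ρ_{X̃B} = Σ_{x̃} |x̃⟩⟨x̃| ⊗ (Σ_{x : f_X(x)=x̃} P_X(x)|φ_x⟩⟨φ_x|)`,
represented as a block-diagonal matrix with blocks indexed by the (finitely many)
values `x̃` of the dependent part `f_X = condYX P`. -/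
def rhoXtB (P : 𝒳 × 𝒴 → ℝ) :
    Matrix (𝒴 × {v // v ∈ Finset.univ.image (condYX P)})
      (𝒴 × {v // v ∈ Finset.univ.image (condYX P)}) ℂ :=
  Matrix.blockDiagonal fun v : {v // v ∈ Finset.univ.image (condYX P)} =>
    ∑ x ∈ Finset.univ.filter fun x => condYX P x = v.1, (margX P x : ℂ) • outer (phiX P x)

/-- The cq-state `ρ_{ỸA}` with blocks indexed by the values of `f_Y = condXY P`. -/
def rhoYtA (P : 𝒳 × 𝒴 → ℝ) :
    Matrix (𝒳 × {v // v ∈ Finset.univ.image (condXY P)})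
      (𝒳 × {v // v ∈ Finset.univ.image (condXY P)}) ℂ :=
  Matrix.blockDiagonal fun v : {v // v ∈ Finset.univ.image (condXY P)} =>
    ∑ y ∈ Finset.univ.filter fun y => condXY P y = v.1, (margY P y : ℂ) • outer (phiY P y)

open Polynomial in
lemma charpoly_mul_X_pow {R : Type*} [CommRing R] {m n : Type*} [Fintype m] [Fintype n]
    [DecidableEq m] [DecidableEq n] (A : Matrix m n R) (B : Matrix n m R) :
    (A * B).charpoly * X ^ (Fintype.card n) = (B * A).charpoly * X ^ (Fintype.card m) := by
  classical
  set A' := A.map (C : R →+* R[X]) with hA'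
  set B' := B.map (C : R →+* R[X]) with hB'
  have hcAB : Matrix.charmatrix (A * B) = Matrix.scalar m (X : R[X]) - A' * B' := by
    rw [Matrix.charmatrix, RingHom.mapMatrix_apply, Matrix.map_mul]
  have hcBA : Matrix.charmatrix (B * A) = Matrix.scalar n (X : R[X]) - B' * A' := by
    rw [Matrix.charmatrix, RingHom.mapMatrix_apply, Matrix.map_mul]
  have e1 : Matrix.fromBlocks (Matrix.charmatrix (A * B)) A' 0 1
      * Matrix.fromBlocks 1 0 B' 1
      = Matrix.fromBlocks (Matrix.scalar m (X : R[X])) A' B' 1 := by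
    rw [Matrix.fromBlocks_multiply, hcAB]
    ext (i|i) (j|j) <;> simp
  have e2 : Matrix.fromBlocks 1 0 B' 1
      * Matrix.fromBlocks 1 A' 0 (Matrix.charmatrix (B * A))
      = Matrix.fromBlocks 1 A' B' (Matrix.scalar n (X : R[X])) := by
    rw [Matrix.fromBlocks_multiply, hcBA]
    ext (i|i) (j|j) <;> simp
  have hswap : A' * Matrix.scalar n (X : R[X]) = Matrix.scalar m (X : R[X]) * A' := by
    ext i j
    simp [Matrix.scalar, Matrix.mul_diagonal, Matrix.diagonal_mul, mul_comm]
  have q1 : Matrix.fromBlocks (Matrix.scalar m (X : R[X])) A' B' 1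
      * Matrix.fromBlocks 1 0 0 (Matrix.scalar n (X : R[X]))
      = Matrix.fromBlocks (Matrix.scalar m (X : R[X])) (A' * Matrix.scalar n (X : R[X])) B'
        (Matrix.scalar n (X : R[X])) := by
    rw [Matrix.fromBlocks_multiply]
    ext (i|i) (j|j) <;> simp
  have q2 : Matrix.fromBlocks (Matrix.scalar m (X : R[X])) 0 0 1
      * Matrix.fromBlocks 1 A' B' (Matrix.scalar n (X : R[X]))
      = Matrix.fromBlocks (Matrix.scalar m (X : R[X])) (Matrix.scalar m (X : R[X]) * A') B'
        (Matrix.scalar n (X : R[X])) := by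
    rw [Matrix.fromBlocks_multiply]
    ext (i|i) (j|j) <;> simp
  have detm : (Matrix.scalar m (X : R[X])).det = X ^ (Fintype.card m) := by
    rw [show Matrix.scalar m (X : R[X]) = Matrix.diagonal (fun _ => X) from rfl,
      Matrix.det_diagonal]
    simp [Finset.prod_const, Finset.card_univ]
  have detn : (Matrix.scalar n (X : R[X])).det = X ^ (Fintype.card n) := by
    rw [show Matrix.scalar n (X : R[X]) = Matrix.diagonal (fun _ => X) from rfl,
      Matrix.det_diagonal]
    simp [Finset.prod_const, Finset.card_univ]
  have d1 : (Matrix.fromBlocks (Matrix.scalar m (X : R[X])) A' B' 1).det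
      = (A * B).charpoly := by
    calc (Matrix.fromBlocks (Matrix.scalar m (X : R[X])) A' B' 1).det
        = (Matrix.fromBlocks (Matrix.charmatrix (A * B)) A' 0 1).det
          * (Matrix.fromBlocks (1 : Matrix m m R[X]) 0 B' 1).det := by
          rw [← Matrix.det_mul, e1]
      _ = (A * B).charpoly := by
          rw [Matrix.det_fromBlocks_zero₂₁, Matrix.det_fromBlocks_zero₁₂]
          simp [Matrix.charpoly]
  have d2 : (Matrix.fromBlocks (1 : Matrix m m R[X]) A' B' (Matrix.scalar n (X : R[X]))).det
      = (B * A).charpoly := by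
    calc (Matrix.fromBlocks (1 : Matrix m m R[X]) A' B' (Matrix.scalar n (X : R[X]))).det
        = (Matrix.fromBlocks (1 : Matrix m m R[X]) 0 B' 1).det
          * (Matrix.fromBlocks (1 : Matrix m m R[X]) A' 0 (Matrix.charmatrix (B * A))).det := by
          rw [← Matrix.det_mul, e2]
      _ = (B * A).charpoly := by
          rw [Matrix.det_fromBlocks_zero₁₂, Matrix.det_fromBlocks_zero₂₁]
          simp [Matrix.charpoly]
  have key := congrArg Matrix.det q1
  have key2 := congrArg Matrix.det q2
  rw [Matrix.det_mul, d1, Matrix.det_fromBlocks_zero₂₁, Matrix.det_one, one_mul,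
    detn] at key
  rw [Matrix.det_mul, Matrix.det_fromBlocks_zero₂₁, Matrix.det_one, mul_one, d2,
    detm] at key2
  rw [key, hswap, ← key2]; ring

def negEnt (t : ℝ) : ℝ := -(t * Real.logb 2 t)

lemma shannonEntropy_eq_sum {α : Type*} [Fintype α] (p : α → ℝ) :
    shannonEntropy p = ∑ x, negEnt (p x) := by
  simp [shannonEntropy, negEnt]

open Polynomial in
def rootEnt (p : Polynomial ℂ) : ℝ := ((p.roots).map (fun z => negEnt z.re)).sum

open Polynomial in
lemma roots_charpoly_diag {n : Type*} [Fintype n] [DecidableEq n] (v : n → ℂ) :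
    (Matrix.diagonal v).charpoly.roots = Finset.univ.val.map v := by
  have h : Matrix.charmatrix (Matrix.diagonal v)
      = Matrix.diagonal (fun i => (X : ℂ[X]) - C (v i)) := by
    ext i j
    by_cases h : i = j
    · subst h; simp
    · simp [Matrix.charmatrix_apply_ne _ _ _ h, Matrix.diagonal_apply_ne _ h]
  have h2 : (Matrix.diagonal v).charpoly
      = ((Finset.univ.val.map v).map (fun a => X - C a)).prod := by
    rw [Matrix.charpoly, h, Matrix.det_diagonal, Multiset.map_map, Finset.prod_eq_multiset_prod]
    rfl
  rw [h2, Polynomial.roots_multiset_prod_X_sub_C]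

open Polynomial in
lemma charpoly_unitary_conj {n : Type*} [Fintype n] [DecidableEq n] (U D : Matrix n n ℂ)
    (hU : U ∈ Matrix.unitaryGroup n ℂ) : (U * D * star U).charpoly = D.charpoly := by
  have h1 := charpoly_mul_X_pow U (D * star U)
  have h2 : (D * star U) * U = D := by
    rw [Matrix.mul_assoc, (Matrix.mem_unitaryGroup_iff').mp hU, Matrix.mul_one]
  rw [h2] at h1
  have := mul_right_cancel₀ (pow_ne_zero (Fintype.card n) (Polynomial.X_ne_zero (R := ℂ))) h1
  rwa [Matrix.mul_assoc]

lemma roots_charpoly_hermitian {n : Type*} [Fintype n] [DecidableEq n] {A : Matrix n n ℂ}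
    (hA : A.IsHermitian) :
    A.charpoly.roots = Finset.univ.val.map (fun i => (hA.eigenvalues i : ℂ)) := by
  have h : A.charpoly
      = (Matrix.diagonal (RCLike.ofReal ∘ hA.eigenvalues : n → ℂ)).charpoly := by
    conv_lhs => rw [hA.spectral_theorem]
    exact charpoly_unitary_conj _ _ (hA.eigenvectorUnitary).2
  rw [h, roots_charpoly_diag]
  exact Multiset.map_congr rfl (fun i _ => rfl)

lemma vNE_eq_rootEnt {n : Type*} [Fintype n] [DecidableEq n] {A : Matrix n n ℂ}
    (hA : A.IsHermitian) : vonNeumannEntropy A = rootEnt A.charpoly := by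
  rw [vonNeumannEntropy, dif_pos hA, rootEnt, roots_charpoly_hermitian hA, Multiset.map_map,
    shannonEntropy_eq_sum, Finset.sum_eq_multiset_sum]
  exact congrArg Multiset.sum (Multiset.map_congr rfl (fun i _ => by simp))

open Polynomial in
lemma rootEnt_mul_X_pow {p : ℂ[X]} (hp : p ≠ 0) (k : ℕ) : rootEnt (p * X ^ k) = rootEnt p := by
  rw [rootEnt, Polynomial.roots_mul (mul_ne_zero hp (pow_ne_zero _ Polynomial.X_ne_zero)),
    Polynomial.roots_pow, Polynomial.roots_X, Multiset.nsmul_singleton, Multiset.map_add,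
    Multiset.sum_add, Multiset.map_replicate, Multiset.sum_replicate]
  simp [rootEnt, negEnt]

lemma vNE_eq_of_charpoly {m n : Type*} [Fintype m] [Fintype n] [DecidableEq m] [DecidableEq n]
    {A : Matrix m m ℂ} {B : Matrix n n ℂ} (hA : A.IsHermitian) (hB : B.IsHermitian)
    {a b : ℕ} (h : A.charpoly * Polynomial.X ^ a = B.charpoly * Polynomial.X ^ b) :
    vonNeumannEntropy A = vonNeumannEntropy B := by
  rw [vNE_eq_rootEnt hA, vNE_eq_rootEnt hB,
    ← rootEnt_mul_X_pow (A.charpoly_monic.ne_zero) a, h,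
    rootEnt_mul_X_pow (B.charpoly_monic.ne_zero) b]

lemma vNE_mul_conjTranspose {m n : Type*} [Fintype m] [Fintype n] [DecidableEq m] [DecidableEq n]
    (A : Matrix m n ℂ) : vonNeumannEntropy (A * Aᴴ) = vonNeumannEntropy (Aᴴ * A) :=
  vNE_eq_of_charpoly (Matrix.isHermitian_mul_conjTranspose_self A)
    (Matrix.isHermitian_conjTranspose_mul_self A) (charpoly_mul_X_pow A Aᴴ)

lemma vNE_diagonal {n : Type*} [Fintype n] [DecidableEq n] (d : n → ℝ) :
    vonNeumannEntropy (Matrix.diagonal (fun i => (d i : ℂ))) = shannonEntropy d := by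
  have hH : (Matrix.diagonal (fun i => (d i : ℂ))).IsHermitian :=
    Matrix.isHermitian_diagonal_of_self_adjoint _ (funext fun i => Complex.conj_ofReal _)
  rw [vNE_eq_rootEnt hH, rootEnt, roots_charpoly_diag, Multiset.map_map,
    shannonEntropy_eq_sum, Finset.sum_eq_multiset_sum]
  exact congrArg Multiset.sum (Multiset.map_congr rfl (fun i _ => by simp))

lemma key_strict {n : Type*} [Fintype n] [DecidableEq n] {M : Matrix n n ℂ}
    (hM : M.PosSemidef) {i0 j0 : n} (hij : i0 ≠ j0) (h0 : M i0 j0 ≠ 0) :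
    vonNeumannEntropy M < shannonEntropy (fun i => (M i i).re) := by
  classical
  have hH : M.IsHermitian := hM.1
  set lam : n → ℝ := hH.eigenvalues with hlam
  have hlam0 : ∀ j, 0 ≤ lam j := hM.eigenvalues_nonneg
  set U : Matrix n n ℂ := (hH.eigenvectorUnitary : Matrix n n ℂ) with hUdef
  have hUU : U * star U = 1 := (Matrix.mem_unitaryGroup_iff).mp hH.eigenvectorUnitary.2
  have hUU' : star U * U = 1 := (Matrix.mem_unitaryGroup_iff').mp hH.eigenvectorUnitary.2
  set B : n → n → ℝ := fun i j => Complex.normSq (U i j) with hBdef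
  have hB0 : ∀ i j, 0 ≤ B i j := fun i j => Complex.normSq_nonneg _
  have hrow : ∀ i, ∑ j, B i j = 1 := by
    intro i
    have h2 : (U * star U) i i = (1 : Matrix n n ℂ) i i := by rw [hUU]
    rw [Matrix.mul_apply, Matrix.one_apply_eq] at h2
    have h3 : ∑ j, U i j * (star U) j i = ((∑ j, B i j : ℝ) : ℂ) := by
      push_cast
      refine Finset.sum_congr rfl fun j _ => ?_
      rw [Matrix.star_apply, RCLike.star_def, Complex.mul_conj]
    rw [h3] at h2
    exact_mod_cast h2
  have hcol : ∀ j, ∑ i, B i j = 1 := by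
    intro j
    have h2 : (star U * U) j j = (1 : Matrix n n ℂ) j j := by rw [hUU']
    rw [Matrix.mul_apply, Matrix.one_apply_eq] at h2
    have h3 : ∑ i, (star U) j i * U i j = ((∑ i, B i j : ℝ) : ℂ) := by
      push_cast
      refine Finset.sum_congr rfl fun i _ => ?_
      rw [Matrix.star_apply, RCLike.star_def, mul_comm, Complex.mul_conj]
    rw [h3] at h2
    exact_mod_cast h2
  have hspec := hH.spectral_theorem
  rw [Unitary.conjStarAlgAut_apply] at hspec
  set Dm : Matrix n n ℂ := Matrix.diagonal (RCLike.ofReal ∘ lam) with hDm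
  have hdiag : ∀ i, M i i = ((∑ j, B i j * lam j : ℝ) : ℂ) := by
    intro i
    conv_lhs => rw [hspec]
    rw [Matrix.mul_apply]
    push_cast
    refine Finset.sum_congr rfl fun j _ => ?_
    rw [Matrix.mul_diagonal, Matrix.star_apply, RCLike.star_def]
    have : U i j * (RCLike.ofReal ∘ lam) j * (starRingEnd ℂ) (U i j)
        = ((lam j : ℝ) : ℂ) * (U i j * (starRingEnd ℂ) (U i j)) := by
      simp [Function.comp]; ring
    rw [this, Complex.mul_conj]
    push_cast
    ring
  set d : n → ℝ := fun i => (M i i).re with hddef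
  have hdre : ∀ i, d i = ∑ j, B i j * lam j := by
    intro i
    show (M i i).re = _
    rw [hdiag i, Complex.ofReal_re]
  have hd0 : ∀ i, 0 ≤ d i := by
    intro i
    rw [hdre i]
    exact Finset.sum_nonneg fun j _ => mul_nonneg (hB0 i j) (hlam0 j)
  have hdpos : ∀ i j, 0 < B i j → 0 < lam j → 0 < d i := by
    intro i j hBp hlp
    rw [hdre i]
    calc (0:ℝ) < B i j * lam j := mul_pos hBp hlp
      _ ≤ ∑ j', B i j' * lam j' := Finset.single_le_sum
            (fun j' _ => mul_nonneg (hB0 i j') (hlam0 j')) (Finset.mem_univ j)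
  -- trace of M² in two ways
  have hMsq : M * M = U * (Dm * (Dm * star U)) := by
    conv_lhs => rw [hspec]
    simp only [Matrix.mul_assoc]
    rw [← Matrix.mul_assoc (star U) U, hUU', Matrix.one_mul]
  have htrace : ∑ i, ∑ j, Complex.normSq (M i j) = ∑ j, lam j * lam j := by
    have t1 : (M * M).trace = ((∑ i, ∑ j, Complex.normSq (M i j) : ℝ) : ℂ) := by
      rw [Matrix.trace]
      push_cast
      refine Finset.sum_congr rfl fun i _ => ?_
      rw [Matrix.diag_apply, Matrix.mul_apply]
      refine Finset.sum_congr rfl fun j _ => ?_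
      have hji : M j i = (starRingEnd ℂ) (M i j) := by
        have := congrFun (congrFun hH i) j
        rw [Matrix.conjTranspose_apply] at this
        rw [← this, RCLike.star_def, Complex.conj_conj]
      rw [hji, Complex.mul_conj]
    have t2 : (M * M).trace = ((∑ j, lam j * lam j : ℝ) : ℂ) := by
      rw [hMsq, Matrix.trace_mul_comm, Matrix.mul_assoc Dm (Dm * star U) U,
        Matrix.mul_assoc Dm (star U) U, hUU', Matrix.mul_one,
        Matrix.diagonal_mul_diagonal, Matrix.trace_diagonal]
      push_cast
      simp [Function.comp]
    rw [t1] at t2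
    exact_mod_cast t2
  have hlt : ∑ i, d i * d i < ∑ j, lam j * lam j := by
    rw [← htrace]
    have hle : ∀ i, d i * d i + (if i = i0 then Complex.normSq (M i0 j0) else 0)
        ≤ ∑ j, Complex.normSq (M i j) := by
      intro i
      have hdii : Complex.normSq (M i i) = d i * d i := by
        rw [hdiag i, Complex.normSq_ofReal, ← hdre i]
      by_cases hi : i = i0
      · subst hi
        rw [if_pos rfl]
        have : Complex.normSq (M i i) + Complex.normSq (M i j0)
            ≤ ∑ j, Complex.normSq (M i j) := by
          rw [← Finset.sum_erase_add _ _ (Finset.mem_univ i)]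
          have hj0 : j0 ∈ Finset.univ.erase i := by
            rw [Finset.mem_erase]
            exact ⟨fun h => hij (h ▸ rfl), Finset.mem_univ _⟩
          have := Finset.single_le_sum (f := fun j => Complex.normSq (M i j))
            (fun j _ => Complex.normSq_nonneg _) hj0
          linarith
        rw [hdii] at this
        linarith
      · rw [if_neg hi, add_zero, ← hdii]
        exact Finset.single_le_sum (fun j _ => Complex.normSq_nonneg _) (Finset.mem_univ i)
    have hsum := Finset.sum_le_sum (fun i (_ : i ∈ Finset.univ) => hle i)
    rw [Finset.sum_add_distrib, Finset.sum_ite_eq' Finset.univ i0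
      (fun _ => Complex.normSq (M i0 j0))] at hsum
    have hpos : 0 < Complex.normSq (M i0 j0) := Complex.normSq_pos.mpr h0
    simp only [Finset.mem_univ, if_true] at hsum
    linarith
  -- the per-term quantities
  set T : n → n → ℝ := fun i j =>
    B i j * (lam j * Real.log (lam j) - lam j * Real.log (d i) - lam j + d i) with hTdef
  have hT : ∀ i j, 0 ≤ T i j := by
    intro i j
    rcases (hB0 i j).lt_or_eq with hBp | hBz
    · rcases (hlam0 j).lt_or_eq with hlp | hlz
      · have hdp := hdpos i j hBp hlp
        have hlog := Real.log_le_sub_one_of_pos (div_pos hdp hlp)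
        rw [Real.log_div hdp.ne' hlp.ne'] at hlog
        have h2 := mul_le_mul_of_nonneg_left hlog hlp.le
        have h3 : lam j * (d i / lam j) = d i := by field_simp
        refine mul_nonneg hBp.le ?_
        nlinarith [h2, h3]
      · show 0 ≤ B i j * (lam j * Real.log (lam j) - lam j * Real.log (d i) - lam j + d i)
        rw [← hlz]
        simp only [zero_mul, sub_zero, zero_sub, neg_zero, zero_add]
        exact mul_nonneg hBp.le (by simpa using hd0 i)
    · show 0 ≤ B i j * (lam j * Real.log (lam j) - lam j * Real.log (d i) - lam j + d i)
      rw [← hBz, zero_mul]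
  have hTsum : ∑ i, ∑ j, T i j
      = (∑ j, lam j * Real.log (lam j)) - ∑ i, d i * Real.log (d i) := by
    have e1 : ∑ i, ∑ j, B i j * (lam j * Real.log (lam j)) = ∑ j, lam j * Real.log (lam j) := by
      rw [Finset.sum_comm]
      refine Finset.sum_congr rfl fun j _ => ?_
      rw [← Finset.sum_mul, hcol j, one_mul]
    have e2 : ∑ i, ∑ j, B i j * (lam j * Real.log (d i)) = ∑ i, d i * Real.log (d i) := by
      refine Finset.sum_congr rfl fun i _ => ?_
      rw [hdre i, Finset.sum_mul]
      exact Finset.sum_congr rfl fun j _ => by ring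
    have e3 : ∑ i, ∑ j, B i j * lam j = ∑ i, d i :=
      Finset.sum_congr rfl fun i _ => (hdre i).symm
    have e4 : ∑ i, ∑ j, B i j * d i = ∑ i, d i := by
      refine Finset.sum_congr rfl fun i _ => ?_
      rw [← Finset.sum_mul, hrow i, one_mul]
    have expand : ∀ i j, T i j = B i j * (lam j * Real.log (lam j))
        - B i j * (lam j * Real.log (d i)) - B i j * lam j + B i j * d i := by
      intro i j
      show B i j * _ = _
      ring
    simp only [expand, Finset.sum_add_distrib, Finset.sum_sub_distrib]
    rw [e1, e2, e3, e4]
    ring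
  have hDelta : 0 < (∑ j, lam j * Real.log (lam j)) - ∑ i, d i * Real.log (d i) := by
    rw [← hTsum]
    by_cases hcase : ∀ i j, B i j * (lam j * lam j) = B i j * (lam j * d i)
    · exfalso
      have hc : ∑ j, lam j * lam j = ∑ i, d i * d i := by
        calc ∑ j, lam j * lam j = ∑ j, (∑ i, B i j) * (lam j * lam j) := by
              refine Finset.sum_congr rfl fun j _ => ?_
              rw [hcol j, one_mul]
          _ = ∑ j, ∑ i, B i j * (lam j * lam j) := by
              refine Finset.sum_congr rfl fun j _ => Finset.sum_mul _ _ _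
          _ = ∑ i, ∑ j, B i j * (lam j * lam j) := Finset.sum_comm
          _ = ∑ i, ∑ j, B i j * (lam j * d i) := by
              refine Finset.sum_congr rfl fun i _ => Finset.sum_congr rfl fun j _ => hcase i j
          _ = ∑ i, d i * d i := by
              refine Finset.sum_congr rfl fun i _ => ?_
              rw [hdre i, Finset.sum_mul]
              refine Finset.sum_congr rfl fun j _ => by ring
      linarith
    · push_neg at hcase
      obtain ⟨i1, j1, hne1⟩ := hcase
      have hBp : 0 < B i1 j1 := by
        rcases (hB0 i1 j1).lt_or_eq with h | h
        · exact h
        · exact absurd (by rw [← h, zero_mul, zero_mul]) hne1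
      have hlp : 0 < lam j1 := by
        rcases (hlam0 j1).lt_or_eq with h | h
        · exact h
        · exact absurd (by rw [← h]; ring) hne1
      have hdp : 0 < d i1 := hdpos i1 j1 hBp hlp
      have hdne : d i1 ≠ lam j1 := by
        intro h
        exact hne1 (by rw [h])
      have hlog := Real.log_lt_sub_one_of_pos (div_pos hdp hlp)
        (fun h => hdne ((div_eq_one_iff_eq hlp.ne').mp h))
      rw [Real.log_div hdp.ne' hlp.ne'] at hlog
      have h2 := (mul_lt_mul_iff_right₀ hlp).mpr hlog
      have h3 : lam j1 * (d i1 / lam j1) = d i1 := by field_simp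
      have hTpos : 0 < T i1 j1 := by
        show 0 < B i1 j1 * (lam j1 * Real.log (lam j1) - lam j1 * Real.log (d i1)
          - lam j1 + d i1)
        refine mul_pos hBp ?_
        nlinarith [h2, h3]
      have h4 : T i1 j1 ≤ ∑ j, T i1 j :=
        Finset.single_le_sum (fun j _ => hT i1 j) (Finset.mem_univ j1)
      have h5 : ∑ j, T i1 j ≤ ∑ i, ∑ j, T i j :=
        Finset.single_le_sum (fun i _ => Finset.sum_nonneg fun j _ => hT i j)
          (Finset.mem_univ i1)
      linarith
  -- finish
  have hlog2 : (0:ℝ) < Real.log 2 := Real.log_pos (by norm_num)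
  have hfin : ∀ p : n → ℝ, shannonEntropy p = -((∑ x, p x * Real.log (p x)) / Real.log 2) := by
    intro p
    rw [shannonEntropy, Finset.sum_div]
    congr 1
    refine Finset.sum_congr rfl fun x _ => ?_
    rw [Real.logb, Real.log_div_log]
    rw [Real.logb]
    ring
  have hvne : vonNeumannEntropy M = shannonEntropy lam := by
    rw [vonNeumannEntropy, dif_pos hH]
  rw [hvne, hfin lam, hfin (fun i => (M i i).re)]
  have hdd : ∑ x, (M x x).re * Real.log ((M x x).re) = ∑ i, d i * Real.log (d i) := rfl
  rw [hdd, neg_lt_neg_iff, div_lt_div_iff_of_pos_right hlog2]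
  linarith

/-- The weight of a fibre of `condYX`. -/
def fibW (P : 𝒳 × 𝒴 → ℝ) (v : {v // v ∈ Finset.univ.image (condYX P)}) : ℝ :=
  ∑ x ∈ Finset.univ.filter fun x => condYX P x = v.1, margX P x

/-- `V` matrix whose Gram matrices are `rhoXtB` and `diagonal (fibW)`. -/
def Vm (P : 𝒳 × 𝒴 → ℝ) :
    Matrix (𝒴 × {v // v ∈ Finset.univ.image (condYX P)})
      {v // v ∈ Finset.univ.image (condYX P)} ℂ :=
  fun p w => (((if p.2 = w then Real.sqrt (fibW P w) * Real.sqrt (w.1 p.1) else 0) : ℝ) : ℂ)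

/-- `C` matrix whose Gram matrices are `rhoB` and the Gram mixture matrix. -/
def Cm (P : 𝒳 × 𝒴 → ℝ) :
    Matrix 𝒴 {v // v ∈ Finset.univ.image (condYX P)} ℂ :=
  fun y v => ((Real.sqrt (fibW P v) * Real.sqrt (v.1 y) : ℝ) : ℂ)

lemma sqq {a u w : ℝ} (ha : 0 ≤ a) :
    (Real.sqrt a * u) * (Real.sqrt a * w) = a * (u * w) := by
  rw [show (Real.sqrt a * u) * (Real.sqrt a * w)
    = (Real.sqrt a * Real.sqrt a) * (u * w) from by ring, Real.mul_self_sqrt ha]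

section ProbSide

variable (P : 𝒳 × 𝒴 → ℝ)

lemma margX_nonneg (hP0 : ∀ p, 0 ≤ P p) (x : 𝒳) : 0 ≤ margX P x :=
  Finset.sum_nonneg fun y _ => hP0 _

lemma condYX_nonneg (hP0 : ∀ p, 0 ≤ P p) (x : 𝒳) (y : 𝒴) : 0 ≤ condYX P x y := by
  rcases (margX_nonneg P hP0 x).lt_or_eq with h | h
  · exact div_nonneg (hP0 _) h.le
  · rw [condYX, ← h, div_zero]

lemma val_nonneg (hP0 : ∀ p, 0 ≤ P p) (v : {v // v ∈ Finset.univ.image (condYX P)})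
    (y : 𝒴) : 0 ≤ v.1 y := by
  obtain ⟨x, _, hx⟩ := Finset.mem_image.mp v.2
  rw [← hx]
  exact condYX_nonneg P hP0 x y

lemma fibW_nonneg (hP0 : ∀ p, 0 ≤ P p) (v : {v // v ∈ Finset.univ.image (condYX P)}) :
    0 ≤ fibW P v :=
  Finset.sum_nonneg fun x _ => margX_nonneg P hP0 x

lemma sum_condYX (x : 𝒳) (h : margX P x ≠ 0) : ∑ y, condYX P x y = 1 := by
  rw [show ∑ y, condYX P x y = (∑ y, P (x, y)) / margX P x from by
    rw [Finset.sum_div]; rfl]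
  rw [show ∑ y, P (x, y) = margX P x from rfl, div_self h]

lemma fibW_mul_sum (v : {v // v ∈ Finset.univ.image (condYX P)}) :
    fibW P v * (∑ y, v.1 y) = fibW P v := by
  by_cases hex : ∃ x, condYX P x = v.1 ∧ margX P x ≠ 0
  · obtain ⟨x, hxv, hx⟩ := hex
    rw [show (∑ y, v.1 y) = 1 from by rw [← hxv]; exact sum_condYX P x hx, mul_one]
  · push_neg at hex
    have : fibW P v = 0 := by
      refine Finset.sum_eq_zero fun x hx => ?_
      rw [Finset.mem_filter] at hx
      by_contra h
      exact h (hex x hx.2)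
    rw [this, zero_mul]

/-- Entry formula for the block sums appearing in `rhoXtB`. -/
lemma block_entry (v : {v // v ∈ Finset.univ.image (condYX P)}) (y y' : 𝒴) :
    (∑ x ∈ Finset.univ.filter fun x => condYX P x = v.1,
      (margX P x : ℂ) • outer (phiX P x)) y y'
    = ((fibW P v * (Real.sqrt (v.1 y) * Real.sqrt (v.1 y')) : ℝ) : ℂ) := by
  rw [Matrix.sum_apply]
  have h1 : ∀ x ∈ Finset.univ.filter fun x => condYX P x = v.1,
      ((margX P x : ℂ) • outer (phiX P x)) y y'
      = ((margX P x * (Real.sqrt (v.1 y) * Real.sqrt (v.1 y')) : ℝ) : ℂ) := by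
    intro x hx
    rw [Finset.mem_filter] at hx
    simp only [Matrix.smul_apply, outer, phiX, hx.2, Complex.conj_ofReal, smul_eq_mul]
    push_cast
    ring
  rw [Finset.sum_congr rfl h1, ← Complex.ofReal_sum, ← Finset.sum_mul]
  rfl

lemma hVV (hP0 : ∀ p, 0 ≤ P p) : Vm P * (Vm P)ᴴ = rhoXtB P := by
  ext ⟨y, a⟩ ⟨y', b⟩
  rw [rhoXtB, Matrix.blockDiagonal_apply, Matrix.mul_apply]
  have h1 : ∀ w, Vm P (y, a) w * (Vm P)ᴴ w (y', b)
      = (((if a = w then Real.sqrt (fibW P w) * Real.sqrt (w.1 y) else 0)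
        * (if b = w then Real.sqrt (fibW P w) * Real.sqrt (w.1 y') else 0) : ℝ) : ℂ) := by
    intro w
    simp only [Vm, Matrix.conjTranspose_apply, RCLike.star_def, Complex.conj_ofReal,
      ← Complex.ofReal_mul]
  rw [Finset.sum_congr rfl (fun w _ => h1 w), ← Complex.ofReal_sum]
  by_cases hab : a = b
  · subst hab
    rw [if_pos rfl, block_entry]
    congr 1
    rw [Finset.sum_eq_single a]
    · rw [if_pos rfl, if_pos rfl, sqq (fibW_nonneg P hP0 a)]
    · intro w _ hw
      rw [if_neg (fun h => hw (h.symm)), zero_mul]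
    · intro h
      exact absurd (Finset.mem_univ a) h
  · rw [if_neg hab]
    rw [show (0 : ℂ) = ((0 : ℝ) : ℂ) from by norm_num]
    congr 1
    refine Finset.sum_eq_zero fun w _ => ?_
    by_cases haw : a = w
    · rw [if_neg (show ¬(b = w) from fun h => hab (haw.trans h.symm)), mul_zero]
    · rw [if_neg (show ¬(a = w) from haw), zero_mul]

lemma hVtV (hP0 : ∀ p, 0 ≤ P p) :
    (Vm P)ᴴ * Vm P = Matrix.diagonal
      (fun v : {v // v ∈ Finset.univ.image (condYX P)} => ((fibW P v : ℝ) : ℂ)) := by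
  ext v w
  rw [Matrix.mul_apply, Matrix.diagonal_apply]
  have h1 : ∀ p : 𝒴 × {v // v ∈ Finset.univ.image (condYX P)},
      (Vm P)ᴴ v p * Vm P p w
      = (((if p.2 = v then Real.sqrt (fibW P v) * Real.sqrt (v.1 p.1) else 0)
        * (if p.2 = w then Real.sqrt (fibW P w) * Real.sqrt (w.1 p.1) else 0) : ℝ) : ℂ) := by
    intro p
    simp only [Vm, Matrix.conjTranspose_apply, RCLike.star_def, Complex.conj_ofReal,
      ← Complex.ofReal_mul]
  rw [Finset.sum_congr rfl (fun p _ => h1 p), ← Complex.ofReal_sum]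
  by_cases hvw : v = w
  · subst hvw
    rw [if_pos rfl]
    congr 1
    rw [Fintype.sum_prod_type_right]
    have h2 : ∀ a, (∑ y : 𝒴, (if a = v then Real.sqrt (fibW P v) * Real.sqrt (v.1 y) else 0)
        * (if a = v then Real.sqrt (fibW P v) * Real.sqrt (v.1 y) else 0))
        = if a = v then ∑ y : 𝒴, fibW P v * v.1 y else 0 := by
      intro a
      by_cases hav : a = v
      · subst hav
        simp only [if_pos rfl, if_true, eq_self_iff_true, ite_true]
        refine Finset.sum_congr rfl fun y _ => ?_
        rw [sqq (fibW_nonneg P hP0 a), Real.mul_self_sqrt (val_nonneg P hP0 a y)]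
      · simp only [if_neg hav, zero_mul, Finset.sum_const_zero]
    rw [Finset.sum_congr rfl (fun a _ => h2 a), Finset.sum_ite_eq' Finset.univ v]
    rw [if_pos (Finset.mem_univ v), ← Finset.mul_sum, fibW_mul_sum]
  · rw [if_neg hvw, show (0 : ℂ) = ((0 : ℝ) : ℂ) from by norm_num]
    congr 1
    refine Finset.sum_eq_zero fun p _ => ?_
    by_cases hpv : p.2 = v
    · rw [if_neg (fun h => hvw (hpv.symm.trans h)), mul_zero]
    · rw [if_neg hpv, zero_mul]

lemma rhoB_entry (y y' : 𝒴) :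
    rhoB P y y' = ((∑ v : {v // v ∈ Finset.univ.image (condYX P)},
      fibW P v * (Real.sqrt (v.1 y) * Real.sqrt (v.1 y')) : ℝ) : ℂ) := by
  rw [rhoB, Matrix.sum_apply]
  have hmaps : ∀ x ∈ (Finset.univ : Finset 𝒳), condYX P x ∈ Finset.univ.image (condYX P) :=
    fun x _ => Finset.mem_image_of_mem _ (Finset.mem_univ x)
  have hfib := Finset.sum_fiberwise_of_maps_to hmaps
    (fun x => ((margX P x : ℂ) • outer (phiX P x)) y y')
  rw [← hfib, Finset.univ_eq_attach (Finset.univ.image (condYX P)), Complex.ofReal_sum,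
    ← Finset.sum_attach (Finset.univ.image (condYX P))
      (fun v => ∑ x ∈ Finset.univ.filter fun x => condYX P x = v,
        ((margX P x : ℂ) • outer (phiX P x)) y y')]
  refine Finset.sum_congr rfl fun v _ => ?_
  rw [← Matrix.sum_apply, block_entry]

lemma hCC (hP0 : ∀ p, 0 ≤ P p) : Cm P * (Cm P)ᴴ = rhoB P := by
  ext y y'
  rw [Matrix.mul_apply, rhoB_entry, Complex.ofReal_sum]
  refine Finset.sum_congr rfl fun v _ => ?_
  simp only [Cm, Matrix.conjTranspose_apply, RCLike.star_def, Complex.conj_ofReal,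
    ← Complex.ofReal_mul]
  congr 1
  rw [sqq (fibW_nonneg P hP0 v)]

lemma hCtC_entry (v w : {v // v ∈ Finset.univ.image (condYX P)}) :
    ((Cm P)ᴴ * Cm P) v w = ((∑ y, (Real.sqrt (fibW P v) * Real.sqrt (v.1 y))
      * (Real.sqrt (fibW P w) * Real.sqrt (w.1 y)) : ℝ) : ℂ) := by
  rw [Matrix.mul_apply, Complex.ofReal_sum]
  refine Finset.sum_congr rfl fun y _ => ?_
  simp only [Cm, Matrix.conjTranspose_apply, RCLike.star_def, Complex.conj_ofReal,
    ← Complex.ofReal_mul]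

lemma hCtC_diag (hP0 : ∀ p, 0 ≤ P p) (v : {v // v ∈ Finset.univ.image (condYX P)}) :
    ((Cm P)ᴴ * Cm P) v v = ((fibW P v : ℝ) : ℂ) := by
  rw [hCtC_entry]
  congr 1
  have h1 : ∀ y, (Real.sqrt (fibW P v) * Real.sqrt (v.1 y))
      * (Real.sqrt (fibW P v) * Real.sqrt (v.1 y)) = fibW P v * v.1 y := by
    intro y
    rw [sqq (fibW_nonneg P hP0 v), Real.mul_self_sqrt (val_nonneg P hP0 v y)]
  rw [Finset.sum_congr rfl (fun y _ => h1 y), ← Finset.mul_sum, fibW_mul_sum]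

lemma goalA (hP0 : ∀ p, 0 ≤ P p)
    (hW : ∃ x x' y, 0 < P (x, y) ∧ 0 < P (x', y) ∧ condYX P x ≠ condYX P x') :
    0 < vonNeumannEntropy (rhoXtB P) - vonNeumannEntropy (rhoB P) := by
  obtain ⟨x, x', y0, hx, hx', hne⟩ := hW
  have e1 : vonNeumannEntropy (rhoXtB P) = shannonEntropy (fibW P) := by
    rw [← hVV P hP0, vNE_mul_conjTranspose, hVtV P hP0, vNE_diagonal]
  have e2 : vonNeumannEntropy (rhoB P) = vonNeumannEntropy ((Cm P)ᴴ * Cm P) := by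
    rw [← hCC P hP0, vNE_mul_conjTranspose]
  set v0 : {v // v ∈ Finset.univ.image (condYX P)} :=
    ⟨condYX P x, Finset.mem_image_of_mem _ (Finset.mem_univ x)⟩ with hv0
  set w0 : {v // v ∈ Finset.univ.image (condYX P)} :=
    ⟨condYX P x', Finset.mem_image_of_mem _ (Finset.mem_univ x')⟩ with hw0
  have hvw : v0 ≠ w0 := fun h => hne (congrArg Subtype.val h)
  have hmx : 0 < margX P x :=
    lt_of_lt_of_le hx (Finset.single_le_sum (fun y _ => hP0 (x, y)) (Finset.mem_univ y0))
  have hmx' : 0 < margX P x' :=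
    lt_of_lt_of_le hx' (Finset.single_le_sum (fun y _ => hP0 (x', y)) (Finset.mem_univ y0))
  have hqv : 0 < fibW P v0 := by
    refine lt_of_lt_of_le hmx (Finset.single_le_sum (fun z _ => margX_nonneg P hP0 z) ?_)
    exact Finset.mem_filter.mpr ⟨Finset.mem_univ x, rfl⟩
  have hqw : 0 < fibW P w0 := by
    refine lt_of_lt_of_le hmx' (Finset.single_le_sum (fun z _ => margX_nonneg P hP0 z) ?_)
    exact Finset.mem_filter.mpr ⟨Finset.mem_univ x', rfl⟩
  have hvy : 0 < v0.1 y0 := div_pos hx hmx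
  have hwy : 0 < w0.1 y0 := div_pos hx' hmx'
  have hoff : ((Cm P)ᴴ * Cm P) v0 w0 ≠ 0 := by
    rw [hCtC_entry, Complex.ofReal_ne_zero]
    have hpos : 0 < ∑ y, (Real.sqrt (fibW P v0) * Real.sqrt (v0.1 y))
        * (Real.sqrt (fibW P w0) * Real.sqrt (w0.1 y)) := by
      refine Finset.sum_pos' (fun y _ => ?_) ⟨y0, Finset.mem_univ y0, ?_⟩
      · exact mul_nonneg (mul_nonneg (Real.sqrt_nonneg _) (Real.sqrt_nonneg _))
          (mul_nonneg (Real.sqrt_nonneg _) (Real.sqrt_nonneg _))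
      · exact mul_pos (mul_pos (Real.sqrt_pos.mpr hqv) (Real.sqrt_pos.mpr hvy))
          (mul_pos (Real.sqrt_pos.mpr hqw) (Real.sqrt_pos.mpr hwy))
    exact hpos.ne'
  have hlt := key_strict (Matrix.posSemidef_conjTranspose_mul_self (Cm P)) hvw hoff
  have e3 : (fun v => (((Cm P)ᴴ * Cm P) v v).re) = fibW P := by
    funext v
    rw [hCtC_diag P hP0 v, Complex.ofReal_re]
  rw [e3] at hlt
  rw [e1, e2]
  linarith

lemma witness_of_depCondEntropyX (hP0 : ∀ p, 0 ≤ P p) (hNT : 0 < depCondEntropyX P) :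
    ∃ x x' y, 0 < P (x, y) ∧ 0 < P (x', y) ∧ condYX P x ≠ condYX P x' := by
  by_contra hc
  push_neg at hc
  have hzero : depCondEntropyX P = 0 := by
    rw [depCondEntropyX, neg_eq_zero]
    refine Finset.sum_eq_zero fun p _ => ?_
    rcases (hP0 p).lt_or_eq with hp | hp
    · have hp' : 0 < P (p.1, p.2) := by rwa [Prod.mk.eta]
      have hfull : (∑ x' ∈ Finset.univ.filter fun x' => condYX P x' = condYX P p.1,
          P (x', p.2)) = margY P p.2 := by
        rw [margY]
        refine Finset.sum_filter_of_ne fun x' _ hne => ?_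
        have hpos : 0 < P (x', p.2) := (hP0 _).lt_of_ne (Ne.symm hne)
        exact hc x' p.1 p.2 hpos hp'
      have hY : margY P p.2 ≠ 0 := by
        have : 0 < margY P p.2 :=
          lt_of_lt_of_le hp' (Finset.single_le_sum (fun z _ => hP0 (z, p.2))
            (Finset.mem_univ p.1))
        exact this.ne'
      rw [hfull, div_self hY, Real.logb_one, mul_zero]
    · rw [← hp, zero_mul]
  linarith

lemma witness_symm (hP0 : ∀ p, 0 ≤ P p)
    (hW : ∃ x x' y, 0 < P (x, y) ∧ 0 < P (x', y) ∧ condYX P x ≠ condYX P x') :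
    ∃ y y' x, 0 < P (x, y) ∧ 0 < P (x, y') ∧ condXY P y ≠ condXY P y' := by
  by_contra hc
  push_neg at hc
  obtain ⟨x, x', y0, hx, hx', hne⟩ := hW
  apply hne
  set s : ℝ := ∑ y ∈ Finset.univ.filter (fun y => condXY P y = condXY P y0), margY P y with hs
  have main : ∀ z, 0 < P (z, y0) → condYX P z
      = fun y1 => if condXY P y1 = condXY P y0 then margY P y1 / s else 0 := by
    intro z hz
    have hY0 : 0 < margY P y0 :=
      lt_of_lt_of_le hz (Finset.single_le_sum (fun u _ => hP0 (u, y0)) (Finset.mem_univ z))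
    set c : ℝ := condXY P y0 z with hcdef
    have hcpos : 0 < c := div_pos hz hY0
    have hPz : ∀ y, P (z, y) = if condXY P y = condXY P y0 then c * margY P y else 0 := by
      intro y
      rcases (hP0 (z, y)).lt_or_eq with hp | hp
      · have heq : condXY P y = condXY P y0 := hc y y0 z hp hz
        rw [if_pos heq]
        have hYy : 0 < margY P y :=
          lt_of_lt_of_le hp (Finset.single_le_sum (fun u _ => hP0 (u, y)) (Finset.mem_univ z))
        have hcc : c = P (z, y) / margY P y := by
          rw [hcdef, ← congrFun heq z]
          rfl
        rw [hcc, div_mul_cancel₀ _ hYy.ne']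
      · by_cases heq : condXY P y = condXY P y0
        · exfalso
          have h1 : condXY P y z = 0 := by
            rw [condXY, ← hp, zero_div]
          have h2 : condXY P y z = c := congrFun heq z
          rw [h1] at h2
          exact hcpos.ne h2
        · rw [if_neg heq, ← hp]
    have hmz : margX P z = c * s := by
      rw [margX, Finset.sum_congr rfl (fun y _ => hPz y), ← Finset.sum_filter, hs,
        Finset.mul_sum]
    funext y1
    rw [show condYX P z y1 = P (z, y1) / margX P z from rfl, hPz y1, hmz]
    by_cases heq : condXY P y1 = condXY P y0
    · rw [if_pos heq, if_pos heq, mul_div_mul_left _ _ hcpos.ne']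
    · rw [if_neg heq, if_neg heq, zero_div]
  rw [main x hx, main x' hx']

end ProbSide

/-- the canonical embedding of a non-trivial primitive is a non-trivial
embedding: if `H(X↘Y | Y) > 0` then `S(X↘Y | B) > 0` and `S(Y↘X | A) > 0`. -/
theorem canonical_embedding_nontrivial
    (P : 𝒳 × 𝒴 → ℝ) (hP0 : ∀ p, 0 ≤ P p) (hP1 : ∑ p, P p = 1)
    (hNT : 0 < depCondEntropyX P) :
    0 < vonNeumannEntropy (rhoXtB P) - vonNeumannEntropy (rhoB P) ∧
    0 < vonNeumannEntropy (rhoYtA P) - vonNeumannEntropy (rhoA P) := by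
  have hW := witness_of_depCondEntropyX P hP0 hNT
  refine ⟨goalA P hP0 hW, ?_⟩
  set P' : 𝒴 × 𝒳 → ℝ := fun p => P (p.2, p.1) with hP'def
  have hP0' : ∀ p, 0 ≤ P' p := fun p => hP0 _
  have hW' : ∃ y y' x, 0 < P' (y, x) ∧ 0 < P' (y', x) ∧ condYX P' y ≠ condYX P' y' := by
    obtain ⟨y, y', x, h1, h2, h3⟩ := witness_symm P hP0 hW
    exact ⟨y, y', x, h1, h2, h3⟩
  have h2 := goalA P' hP0' hW'
  have e1 : rhoYtA P = rhoXtB P' := rfl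
  have e2 : rhoA P = rhoB P' := rfl
  rw [e1, e2]
  exact h2


end
end

section
/- For every embedding ψ of a probability mass function P on a finite set 𝒳×𝒴, the two leakage quantities coincide: S(X;BB')_ψ − I(X;Y) = S(AA';Y)_ψ − I(X;Y); in particular the leakage Δ_ψ := max{S(X;BB')_ψ − I(X;Y), S(AA';Y)_ψ − I(X;Y)} equals S(X;BB')_ψ − I(X;Y). -/
open scoped BigOperators
open Matrix
open scoped ComplexOrder

noncomputable section

/-- Partial trace over the first tensor factor. -/
def trLeft {m n : Type*} [Fintype m] (ρ : Matrix (m × n) (m × n) ℂ) : Matrix n n ℂ :=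
  fun i j => ∑ a, ρ (a, i) (a, j)

/-- Partial trace over the second tensor factor. -/
def trRight {m n : Type*} [Fintype n] (ρ : Matrix (m × n) (m × n) ℂ) : Matrix m m ℂ :=
  fun i j => ∑ b, ρ (i, b) (j, b)

variable {𝒳 𝒴 : Type*} [Fintype 𝒳] [Fintype 𝒴] [DecidableEq 𝒳] [DecidableEq 𝒴]

/-- Classical base-2 mutual information `I(X;Y) = H(X) + H(Y) − H(X,Y)`. -/
def mutualInfo (P : 𝒳 × 𝒴 → ℝ) : ℝ :=
  shannonEntropy (margX P) + shannonEntropy (margY P) - shannonEntropy P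

section embedding

variable {dA dB : ℕ}

/-- Block `x` of the cq-state `ρ_{XBB'}`: the quantum state on registers `B B'` (the
working register `A'` traced out) obtained from
`(⟨x|_A ⊗ I)|ψ⟩⟨ψ|(|x⟩_A ⊗ I)` for the embedding
`|ψ⟩ = Σ_{x,y} √P(x,y) |x⟩|y⟩|φ^{x,y}⟩_{A'B'}`. -/
def blockX (P : 𝒳 × 𝒴 → ℝ) (φ : 𝒳 → 𝒴 → Fin dA × Fin dB → ℂ) (x : 𝒳) :
    Matrix (𝒴 × Fin dB) (𝒴 × Fin dB) ℂ := fun p q =>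
  ∑ a : Fin dA,
    ((Real.sqrt (P (x, p.1)) : ℂ) * φ x p.1 (a, p.2)) *
      (starRingEnd ℂ) ((Real.sqrt (P (x, q.1)) : ℂ) * φ x q.1 (a, q.2))

/-- Block `y` of the cq-state `ρ_{AA'Y}`: the state on `A A'` with `B'` traced out. -/
def blockY (P : 𝒳 × 𝒴 → ℝ) (φ : 𝒳 → 𝒴 → Fin dA × Fin dB → ℂ) (y : 𝒴) :
    Matrix (𝒳 × Fin dA) (𝒳 × Fin dA) ℂ := fun p q =>
  ∑ b : Fin dB,
    ((Real.sqrt (P (p.1, y)) : ℂ) * φ p.1 y (p.2, b)) *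
      (starRingEnd ℂ) ((Real.sqrt (P (q.1, y)) : ℂ) * φ q.1 y (q.2, b))

/-- `S(X;BB')_ψ = H(X) + S(ρ_{BB'}) − S(ρ_{XBB'})`. -/
def SXBB (P : 𝒳 × 𝒴 → ℝ) (φ : 𝒳 → 𝒴 → Fin dA × Fin dB → ℂ) : ℝ :=
  shannonEntropy (margX P) + vonNeumannEntropy (∑ x, blockX P φ x) -
    vonNeumannEntropy (Matrix.blockDiagonal (blockX P φ))

/-- `S(AA';Y)_ψ = H(Y) + S(ρ_{AA'}) − S(ρ_{AA'Y})`. -/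
def SAAY (P : 𝒳 × 𝒴 → ℝ) (φ : 𝒳 → 𝒴 → Fin dA × Fin dB → ℂ) : ℝ :=
  shannonEntropy (margY P) + vonNeumannEntropy (∑ y, blockY P φ y) -
    vonNeumannEntropy (Matrix.blockDiagonal (blockY P φ))

end embedding

set_option linter.unusedSectionVars false
set_option maxHeartbeats 1000000

namespace LeakAux

open Polynomial


def g (z : ℂ) : ℝ := -(z.re * Real.logb 2 z.re)

@[simp] lemma g_zero : g 0 = 0 := by simp [g]

variable {m n : Type*} [Fintype m] [Fintype n] [DecidableEq m] [DecidableEq n]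

def specEnt (ρ : Matrix m m ℂ) : ℝ := ((ρ.charpoly).roots.map g).sum

lemma charmatrix_eq {R : Type*} [CommRing R] (M : Matrix m m R) :
    charmatrix M = (X : R[X]) • (1 : Matrix m m R[X]) - M.map C := by
  rw [charmatrix, smul_one_eq_diagonal, scalar_apply, RingHom.mapMatrix_apply]

lemma det_scalar_sub_mul {R : Type*} [CommRing R] (A : Matrix m n R) (B : Matrix n m R) (t : R) :
    (t • 1 - A * B).det * t ^ (Fintype.card n) = t ^ (Fintype.card m) * (t • 1 - B * A).det := by
  have key : (fromBlocks 1 A 0 1 : Matrix (m ⊕ n) (m ⊕ n) R) *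
      fromBlocks (t • 1 - A * B) 0 B (t • 1)
      = fromBlocks (t • 1) 0 B 1 * fromBlocks 1 A 0 (t • 1 - B * A) := by
    simp only [fromBlocks_multiply, Matrix.one_mul, Matrix.mul_one, Matrix.zero_mul,
      Matrix.mul_zero, add_zero, zero_add, Matrix.mul_smul, Matrix.smul_mul, sub_add_cancel]
    have h2 : B * A + (t • (1 : Matrix n n R) - B * A) = t • 1 := by abel
    rw [h2]
  have hd := congrArg Matrix.det key
  rw [Matrix.det_mul, Matrix.det_mul, det_fromBlocks_zero₂₁, det_fromBlocks_zero₁₂,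
    det_fromBlocks_zero₁₂, det_fromBlocks_zero₂₁, Matrix.det_one, Matrix.det_one,
    Matrix.det_smul, Matrix.det_smul, Matrix.det_one] at hd
  calc (t • 1 - A * B).det * t ^ Fintype.card n
      = 1 * 1 * ((t • 1 - A * B).det * (t ^ Fintype.card n * 1)) := by ring
    _ = t ^ Fintype.card m * det (1 : Matrix m m R) * 1 * (1 * (t • 1 - B * A).det) := hd
    _ = t ^ Fintype.card m * det (1 : Matrix m m R) * (t • 1 - B * A).det := by ring
    _ = t ^ Fintype.card m * (t • 1 - B * A).det := by rw [Matrix.det_one]; ring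


lemma charpoly_mul_comm_pow (A : Matrix m n ℂ) (B : Matrix n m ℂ) :
    (A * B).charpoly * X ^ (Fintype.card n) = X ^ (Fintype.card m) * (B * A).charpoly := by
  rw [Matrix.charpoly, Matrix.charpoly, charmatrix_eq, charmatrix_eq, Matrix.map_mul,
    Matrix.map_mul]
  exact det_scalar_sub_mul (A.map C) (B.map C) X

lemma specEnt_of_charpoly_mul {a b : ℕ} (ρ : Matrix m m ℂ) (σ : Matrix n n ℂ)
    (h : ρ.charpoly * X ^ a = X ^ b * σ.charpoly) : specEnt ρ = specEnt σ := by
  have h1 : (ρ.charpoly * X ^ a).roots = ρ.charpoly.roots + a • ({0} : Multiset ℂ) := by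
    rw [Polynomial.roots_mul (mul_ne_zero ρ.charpoly_monic.ne_zero (pow_ne_zero _ X_ne_zero)),
      roots_pow, roots_X]
  have h2 : (X ^ b * σ.charpoly).roots = σ.charpoly.roots + b • ({0} : Multiset ℂ) := by
    rw [Polynomial.roots_mul (mul_ne_zero (pow_ne_zero _ X_ne_zero) σ.charpoly_monic.ne_zero),
      roots_pow, roots_X, add_comm]
  have := congrArg (fun s : Multiset ℂ => (s.map g).sum) (h1 ▸ h2 ▸ congrArg Polynomial.roots h)
  simpa [specEnt, Multiset.nsmul_singleton, Multiset.map_replicate] using this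

lemma specEnt_mul_comm (A : Matrix m n ℂ) (B : Matrix n m ℂ) :
    specEnt (A * B) = specEnt (B * A) :=
  specEnt_of_charpoly_mul _ _ (charpoly_mul_comm_pow A B)

lemma charpoly_transpose (A : Matrix m m ℂ) : Aᵀ.charpoly = A.charpoly := by
  rw [Matrix.charpoly, Matrix.charpoly, charmatrix_eq, charmatrix_eq, Matrix.transpose_map,
    ← Matrix.det_transpose (X • 1 - (A.map C)), Matrix.transpose_sub, Matrix.transpose_smul,
    Matrix.transpose_one]

lemma specEnt_transpose (A : Matrix m m ℂ) : specEnt Aᵀ = specEnt A := by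
  rw [specEnt, specEnt, charpoly_transpose]

lemma charpoly_conj (U D V : Matrix m m ℂ) (hUV : U * V = 1) :
    (U * D * V).charpoly = D.charpoly := by
  rw [Matrix.charpoly, Matrix.charpoly, charmatrix_eq, charmatrix_eq]
  have hUV' : U.map C * V.map C = 1 := by rw [← Matrix.map_mul, hUV, Matrix.map_one _ (map_zero C) (map_one C)]
  have : (X : ℂ[X]) • (1 : Matrix m m ℂ[X]) - (U * D * V).map C
      = U.map C * ((X : ℂ[X]) • 1 - D.map C) * V.map C := by
    rw [Matrix.mul_sub, Matrix.sub_mul, Matrix.mul_smul, Matrix.mul_one, Matrix.smul_mul, hUV',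
      Matrix.map_mul, Matrix.map_mul]
  rw [this, Matrix.det_mul, Matrix.det_mul]
  have h3 : (U.map C).det * (V.map C).det = 1 := by rw [← Matrix.det_mul, hUV', Matrix.det_one]
  calc (U.map C).det * ((X : ℂ[X]) • (1 : Matrix m m ℂ[X]) - D.map ⇑C).det * (V.map C).det
      = ((X : ℂ[X]) • (1 : Matrix m m ℂ[X]) - D.map ⇑C).det * ((U.map C).det * (V.map C).det) := by ring
    _ = ((X : ℂ[X]) • (1 : Matrix m m ℂ[X]) - D.map ⇑C).det := by rw [h3, mul_one]

lemma charpoly_diagonal (d : m → ℂ) :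
    (Matrix.diagonal d).charpoly = ∏ i, (X - C (d i)) := by
  rw [Matrix.charpoly, charmatrix_eq, smul_one_eq_diagonal,
    Matrix.diagonal_map (map_zero C)]
  have : ((Matrix.diagonal fun _ : m => (X : ℂ[X])) - Matrix.diagonal fun i => C (d i))
      = Matrix.diagonal (fun i => X - C (d i)) := by
    rw [Matrix.diagonal_sub]
  rw [this, Matrix.det_diagonal]

lemma specEnt_diagonal_real (d : m → ℝ) :
    specEnt (Matrix.diagonal (fun i => (d i : ℂ))) = ∑ i, -(d i * Real.logb 2 (d i)) := by
  rw [specEnt, charpoly_diagonal]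
  have : (∏ i, (X - C ((d i : ℂ)))) = ((Finset.univ.val.map (fun i => ((d i : ℝ) : ℂ))).map
      (fun a => X - C a)).prod := by
    rw [Multiset.map_map]; rfl
  rw [this, Polynomial.roots_multiset_prod_X_sub_C, Multiset.map_map]
  rfl


lemma charpoly_isHermitian {A : Matrix m m ℂ} (hA : A.IsHermitian) :
    A.charpoly = ∏ i, (X - C ((hA.eigenvalues i : ℝ) : ℂ)) := by
  conv_lhs => rw [hA.spectral_theorem, Unitary.conjStarAlgAut_apply]
  rw [charpoly_conj _ _ _ ((Matrix.mem_unitaryGroup_iff).mp (hA.eigenvectorUnitary).2),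
    show (Matrix.diagonal (RCLike.ofReal ∘ hA.eigenvalues) : Matrix m m ℂ)
      = Matrix.diagonal (fun i => ((hA.eigenvalues i : ℝ) : ℂ)) from rfl]
  exact charpoly_diagonal _

lemma specEnt_hermitian {A : Matrix m m ℂ} (hA : A.IsHermitian) :
    specEnt A = ∑ i, -(hA.eigenvalues i * Real.logb 2 (hA.eigenvalues i)) := by
  have h : specEnt A = specEnt (Matrix.diagonal (fun i => ((hA.eigenvalues i : ℝ) : ℂ))) := by
    rw [specEnt, specEnt, charpoly_isHermitian hA, charpoly_diagonal]
  rw [h, specEnt_diagonal_real]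

lemma vonNeumannEntropy_eq_specEnt {A : Matrix m m ℂ} (hA : A.IsHermitian) :
    vonNeumannEntropy A = specEnt A := by
  rw [vonNeumannEntropy, dif_pos hA, shannonEntropy, specEnt_hermitian hA]
  rw [← Finset.sum_neg_distrib]

lemma specEnt_real_smul {A : Matrix m m ℂ} (hA : A.IsHermitian) {c : ℝ} (hc : 0 < c) :
    specEnt ((c : ℂ) • A) = c * specEnt A - c * Real.logb 2 c * ∑ i, hA.eigenvalues i := by
  have h1 : (c : ℂ) • A = (hA.eigenvectorUnitary : Matrix m m ℂ) *
      Matrix.diagonal (fun i => ((c * hA.eigenvalues i : ℝ) : ℂ)) *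
      star (hA.eigenvectorUnitary : Matrix m m ℂ) := by
    conv_lhs => rw [hA.spectral_theorem, Unitary.conjStarAlgAut_apply]
    rw [← Matrix.smul_mul, ← Matrix.mul_smul]
    congr 2
    rw [show (Matrix.diagonal (RCLike.ofReal ∘ hA.eigenvalues) : Matrix m m ℂ)
      = Matrix.diagonal (fun i => ((hA.eigenvalues i : ℝ) : ℂ)) from rfl]
    ext i j
    rcases eq_or_ne i j with rfl | hij
    · simp [Matrix.diagonal_apply_eq]
    · simp [Matrix.diagonal_apply_ne _ hij]
  have h2 : specEnt ((c : ℂ) • A) =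
      ∑ i, -((c * hA.eigenvalues i) * Real.logb 2 (c * hA.eigenvalues i)) := by
    rw [specEnt, h1, charpoly_conj _ _ _ ((Matrix.mem_unitaryGroup_iff).mp
      (hA.eigenvectorUnitary).2), ← specEnt, specEnt_diagonal_real]
  rw [h2, specEnt_hermitian hA, Finset.mul_sum, Finset.mul_sum, ← Finset.sum_sub_distrib]
  apply Finset.sum_congr rfl
  intro i _
  rcases eq_or_ne (hA.eigenvalues i) 0 with h | h
  · simp [h]
  · rw [Real.logb_mul hc.ne' h]
    ring

lemma sum_eigenvalues_eq_trace {A : Matrix m m ℂ} (hA : A.IsHermitian) :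
    ((∑ i, hA.eigenvalues i : ℝ) : ℂ) = A.trace := by
  conv_rhs => rw [hA.spectral_theorem, Unitary.conjStarAlgAut_apply]
  rw [Matrix.trace_mul_cycle, Unitary.coe_star_mul_self, Matrix.one_mul, Matrix.trace_diagonal]
  push_cast
  rfl

lemma charpoly_blockDiagonal {o : Type*} [Fintype o] [DecidableEq o] (M : o → Matrix m m ℂ) :
    (Matrix.blockDiagonal M).charpoly = ∏ k, (M k).charpoly := by
  rw [Matrix.charpoly, charmatrix_eq]
  have h : Matrix.blockDiagonal (fun k => (X : ℂ[X]) • 1 - (M k).map C)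
      = (X : ℂ[X]) • (1 : Matrix (m × o) (m × o) ℂ[X]) - (Matrix.blockDiagonal M).map C := by
    rw [show (fun k => (X : ℂ[X]) • (1 : Matrix m m ℂ[X]) - (M k).map C)
        = ((X : ℂ[X]) • (fun _ : o => (1 : Matrix m m ℂ[X]))) - (fun k => (M k).map C) from rfl,
      Matrix.blockDiagonal_sub, Matrix.blockDiagonal_smul,
      show (fun _ : o => (1 : Matrix m m ℂ[X])) = (1 : o → Matrix m m ℂ[X]) from rfl,
      Matrix.blockDiagonal_one, Matrix.blockDiagonal_map _ _ (map_zero C)]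
  rw [← h, Matrix.det_blockDiagonal]
  apply Finset.prod_congr rfl
  intro k _
  rw [Matrix.charpoly, charmatrix_eq]

lemma specEnt_blockDiagonal {o : Type*} [Fintype o] [DecidableEq o] (M : o → Matrix m m ℂ) :
    specEnt (Matrix.blockDiagonal M) = ∑ k, specEnt (M k) := by
  rw [specEnt, charpoly_blockDiagonal, Polynomial.roots_prod _ _
    (Finset.prod_ne_zero_iff.mpr (fun k _ => (M k).charpoly_monic.ne_zero)),
    Multiset.map_bind, Multiset.sum_bind]
  rfl

lemma specEnt_zero : specEnt (0 : Matrix m m ℂ) = 0 := by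
  have h : (0 : Matrix m m ℂ).charpoly = X ^ (Fintype.card m) := by
    rw [Matrix.charpoly, charmatrix_eq, Matrix.map_zero _ (map_zero C), sub_zero,
      Matrix.det_smul, Matrix.det_one, mul_one]
  rw [specEnt, h, roots_pow, roots_X]
  simp [Multiset.nsmul_singleton, Multiset.map_replicate]


section App

def mat {m n : Type*} (v : m × n → ℂ) : Matrix m n ℂ := Matrix.of fun i b => v (i, b)

variable {p q : Type*} [Fintype p] [Fintype q] [DecidableEq p] [DecidableEq q]

lemma trRight_outer_eq (v : p × q → ℂ) : trRight (outer v) = mat v * (mat v)ᴴ := by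
  ext i j
  simp [trRight, outer, mat, Matrix.mul_apply, Matrix.conjTranspose_apply]

lemma trLeft_outer_eq (v : p × q → ℂ) : trLeft (outer v) = ((mat v)ᴴ * mat v)ᵀ := by
  ext i j
  simp [trLeft, outer, mat, Matrix.mul_apply, Matrix.conjTranspose_apply, mul_comm]

lemma isHermitian_trRight_outer (v : p × q → ℂ) : (trRight (outer v)).IsHermitian := by
  rw [trRight_outer_eq]; exact Matrix.isHermitian_mul_conjTranspose_self _

lemma isHermitian_trLeft_outer (v : p × q → ℂ) : (trLeft (outer v)).IsHermitian := by
  rw [trLeft_outer_eq]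
  have h : ((mat v)ᴴ * mat v).IsHermitian := by
    have := Matrix.isHermitian_mul_conjTranspose_self (mat v)ᴴ
    simpa using this
  exact Matrix.IsHermitian.transpose h

lemma specEnt_trLeft_eq_trRight (v : p × q → ℂ) :
    specEnt (trLeft (outer v)) = specEnt (trRight (outer v)) := by
  rw [trLeft_outer_eq, trRight_outer_eq, specEnt_transpose, specEnt_mul_comm]

lemma trace_trRight_outer (v : p × q → ℂ) (h : ∑ w, ‖v w‖ ^ 2 = 1) :
    (trRight (outer v)).trace = 1 := by
  have key : ∀ z : ℂ, z * (starRingEnd ℂ) z = ((‖z‖ ^ 2 : ℝ) : ℂ) := fun z => by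
    rw [Complex.mul_conj, Complex.normSq_eq_norm_sq]
  have : (trRight (outer v)).trace = ((∑ w, ‖v w‖ ^ 2 : ℝ) : ℂ) := by
    rw [Matrix.trace]
    push_cast
    rw [Fintype.sum_prod_type]
    simp [Matrix.diag, trRight, outer, key]
  rw [this, h]
  norm_num

lemma trace_trLeft_outer (v : p × q → ℂ) (h : ∑ w, ‖v w‖ ^ 2 = 1) :
    (trLeft (outer v)).trace = 1 := by
  have key : ∀ z : ℂ, z * (starRingEnd ℂ) z = ((‖z‖ ^ 2 : ℝ) : ℂ) := fun z => by
    rw [Complex.mul_conj, Complex.normSq_eq_norm_sq]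
  have : (trLeft (outer v)).trace = ((∑ w, ‖v w‖ ^ 2 : ℝ) : ℂ) := by
    rw [Matrix.trace]
    push_cast
    rw [Fintype.sum_prod_type]
    rw [Finset.sum_comm]
    simp [Matrix.diag, trLeft, outer, key]
  rw [this, h]
  norm_num

lemma sum_eig_one {A : Matrix p p ℂ} (hA : A.IsHermitian) (h : A.trace = 1) :
    ∑ i, hA.eigenvalues i = 1 := by
  have h2 := sum_eigenvalues_eq_trace hA
  rw [h] at h2
  exact_mod_cast h2

end App

section Main

variable {𝒳 𝒴 : Type*} [Fintype 𝒳] [Fintype 𝒴] [DecidableEq 𝒳] [DecidableEq 𝒴] {dA dB : ℕ}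

def NX (P : 𝒳 × 𝒴 → ℝ) (φ : 𝒳 → 𝒴 → Fin dA × Fin dB → ℂ) (x : 𝒳) :
    Matrix (𝒴 × Fin dB) (Fin dA) ℂ :=
  Matrix.of fun pp a => (Real.sqrt (P (x, pp.1)) : ℂ) * φ x pp.1 (a, pp.2)

def NY (P : 𝒳 × 𝒴 → ℝ) (φ : 𝒳 → 𝒴 → Fin dA × Fin dB → ℂ) (y : 𝒴) :
    Matrix (𝒳 × Fin dA) (Fin dB) ℂ :=
  Matrix.of fun pp b => (Real.sqrt (P (pp.1, y)) : ℂ) * φ pp.1 y (pp.2, b)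

def WM (P : 𝒳 × 𝒴 → ℝ) (φ : 𝒳 → 𝒴 → Fin dA × Fin dB → ℂ) :
    Matrix (𝒴 × Fin dB) (𝒳 × Fin dA) ℂ :=
  Matrix.of fun pp qq => (Real.sqrt (P (qq.1, pp.1)) : ℂ) * φ qq.1 pp.1 (qq.2, pp.2)

lemma blockX_eq (P : 𝒳 × 𝒴 → ℝ) (φ : 𝒳 → 𝒴 → Fin dA × Fin dB → ℂ) (x : 𝒳) :
    blockX P φ x = NX P φ x * (NX P φ x)ᴴ := by
  ext pp qq
  simp [blockX, NX, Matrix.mul_apply, Matrix.conjTranspose_apply]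

lemma blockY_eq (P : 𝒳 × 𝒴 → ℝ) (φ : 𝒳 → 𝒴 → Fin dA × Fin dB → ℂ) (y : 𝒴) :
    blockY P φ y = NY P φ y * (NY P φ y)ᴴ := by
  ext pp qq
  simp [blockY, NY, Matrix.mul_apply, Matrix.conjTranspose_apply]

lemma NX_conj_form (P : 𝒳 × 𝒴 → ℝ) (hP0 : ∀ p, 0 ≤ P p)
    (φ : 𝒳 → 𝒴 → Fin dA × Fin dB → ℂ) (x : 𝒳) :
    (NX P φ x)ᴴ * NX P φ x
      = (∑ y, ((P (x, y) : ℝ) : ℂ) • trRight (outer (φ x y)))ᵀ := by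
  ext a a'
  simp only [Matrix.conjTranspose_apply, Matrix.mul_apply, NX, Matrix.of_apply,
    Matrix.transpose_apply, Matrix.sum_apply, Matrix.smul_apply, trRight, outer, smul_eq_mul]
  rw [Fintype.sum_prod_type]
  refine Finset.sum_congr rfl fun y _ => ?_
  rw [Finset.mul_sum]
  refine Finset.sum_congr rfl fun b _ => ?_
  have hm : ((Real.sqrt (P (x, y)) : ℂ)) * (Real.sqrt (P (x, y)) : ℂ) = ((P (x, y) : ℝ) : ℂ) := by
    rw [← Complex.ofReal_mul, Real.mul_self_sqrt (hP0 (x, y))]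
  simp only [star_mul', RCLike.star_def, Complex.conj_ofReal]
  linear_combination ((starRingEnd ℂ) (φ x y (a, b)) * φ x y (a', b)) * hm

lemma NY_conj_form (P : 𝒳 × 𝒴 → ℝ) (hP0 : ∀ p, 0 ≤ P p)
    (φ : 𝒳 → 𝒴 → Fin dA × Fin dB → ℂ) (y : 𝒴) :
    (NY P φ y)ᴴ * NY P φ y
      = (∑ x, ((P (x, y) : ℝ) : ℂ) • trLeft (outer (φ x y)))ᵀ := by
  ext b b'
  simp only [Matrix.conjTranspose_apply, Matrix.mul_apply, NY, Matrix.of_apply,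
    Matrix.transpose_apply, Matrix.sum_apply, Matrix.smul_apply, trLeft, outer, smul_eq_mul]
  rw [Fintype.sum_prod_type]
  refine Finset.sum_congr rfl fun x _ => ?_
  rw [Finset.mul_sum]
  refine Finset.sum_congr rfl fun a _ => ?_
  have hm : ((Real.sqrt (P (x, y)) : ℂ)) * (Real.sqrt (P (x, y)) : ℂ) = ((P (x, y) : ℝ) : ℂ) := by
    rw [← Complex.ofReal_mul, Real.mul_self_sqrt (hP0 (x, y))]
  simp only [star_mul', RCLike.star_def, Complex.conj_ofReal]
  linear_combination ((starRingEnd ℂ) (φ x y (a, b)) * φ x y (a, b')) * hm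

lemma sum_blockX_eq (P : 𝒳 × 𝒴 → ℝ) (φ : 𝒳 → 𝒴 → Fin dA × Fin dB → ℂ) :
    ∑ x, blockX P φ x = WM P φ * (WM P φ)ᴴ := by
  ext pp qq
  simp [blockX, WM, Matrix.mul_apply, Matrix.conjTranspose_apply, Matrix.sum_apply,
    Fintype.sum_prod_type]

lemma sum_blockY_eq (P : 𝒳 × 𝒴 → ℝ) (φ : 𝒳 → 𝒴 → Fin dA × Fin dB → ℂ) :
    ∑ y, blockY P φ y = ((WM P φ)ᴴ * WM P φ)ᵀ := by
  ext pp qq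
  simp only [Matrix.sum_apply, blockY, Matrix.transpose_apply, Matrix.mul_apply,
    Matrix.conjTranspose_apply, WM, Matrix.of_apply]
  rw [Fintype.sum_prod_type]
  refine Finset.sum_congr rfl fun y _ => ?_
  refine Finset.sum_congr rfl fun b _ => ?_
  rw [starRingEnd_apply]
  ring

lemma margX_nonneg (P : 𝒳 × 𝒴 → ℝ) (hP0 : ∀ p, 0 ≤ P p) (x : 𝒳) : 0 ≤ margX P x :=
  Finset.sum_nonneg fun y _ => hP0 (x, y)

lemma margY_nonneg (P : 𝒳 × 𝒴 → ℝ) (hP0 : ∀ p, 0 ≤ P p) (y : 𝒴) : 0 ≤ margY P y :=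
  Finset.sum_nonneg fun x _ => hP0 (x, y)

lemma specEnt_blockX_eq (P : 𝒳 × 𝒴 → ℝ) (hP0 : ∀ p, 0 ≤ P p)
    (φ : 𝒳 → 𝒴 → Fin dA × Fin dB → ℂ)
    (hunit : ∀ x y, 0 < P (x, y) → ∑ v, ‖φ x y v‖ ^ 2 = 1)
    (hcorrA : ∀ x y y', 0 < P (x, y) → 0 < P (x, y') →
      trRight (outer (φ x y)) = trRight (outer (φ x y'))) (x : 𝒳) :
    specEnt (blockX P φ x) = (∑ y, P (x, y) * specEnt (trRight (outer (φ x y))))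
      - margX P x * Real.logb 2 (margX P x) := by
  have h1 : specEnt (blockX P φ x)
      = specEnt (∑ y, ((P (x, y) : ℝ) : ℂ) • trRight (outer (φ x y))) := by
    rw [blockX_eq, specEnt_mul_comm, NX_conj_form P hP0, specEnt_transpose]
  rcases eq_or_lt_of_le (margX_nonneg P hP0 x) with hx | hx
  · have hPy : ∀ y, P (x, y) = 0 := by
      intro y
      have := (Finset.sum_eq_zero_iff_of_nonneg (fun y _ => hP0 (x, y))).mp hx.symm
      exact this y (Finset.mem_univ y)
    rw [h1]
    simp [hPy, specEnt_zero, ← hx]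
  · obtain ⟨y₀, -, hy₀⟩ : ∃ y ∈ Finset.univ, 0 < P (x, y) := by
      by_contra hcon
      push_neg at hcon
      have : margX P x ≤ 0 := Finset.sum_nonpos fun y hy => hcon y hy
      linarith
    have hsum : (∑ y, ((P (x, y) : ℝ) : ℂ) • trRight (outer (φ x y)))
        = ((margX P x : ℝ) : ℂ) • trRight (outer (φ x y₀)) := by
      have : ∀ y ∈ Finset.univ, ((P (x, y) : ℝ) : ℂ) • trRight (outer (φ x y))
          = ((P (x, y) : ℝ) : ℂ) • trRight (outer (φ x y₀)) := by
        intro y _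
        rcases eq_or_lt_of_le (hP0 (x, y)) with h0 | h0
        · rw [← h0]; simp
        · rw [hcorrA x y y₀ h0 hy₀]
      rw [Finset.sum_congr rfl this, ← Finset.sum_smul, margX]
      push_cast
      rfl
    have hT : (trRight (outer (φ x y₀))).IsHermitian := isHermitian_trRight_outer _
    have hTr : ∑ i, hT.eigenvalues i = 1 :=
      sum_eig_one hT (trace_trRight_outer _ (hunit x y₀ hy₀))
    rw [h1, hsum, specEnt_real_smul hT hx, hTr, mul_one]
    congr 1
    rw [margX, Finset.sum_mul]
    refine Finset.sum_congr rfl fun y _ => ?_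
    rcases eq_or_lt_of_le (hP0 (x, y)) with h0 | h0
    · rw [← h0]; ring
    · rw [hcorrA x y y₀ h0 hy₀]

lemma specEnt_blockY_eq (P : 𝒳 × 𝒴 → ℝ) (hP0 : ∀ p, 0 ≤ P p)
    (φ : 𝒳 → 𝒴 → Fin dA × Fin dB → ℂ)
    (hunit : ∀ x y, 0 < P (x, y) → ∑ v, ‖φ x y v‖ ^ 2 = 1)
    (hcorrB : ∀ x x' y, 0 < P (x, y) → 0 < P (x', y) →
      trLeft (outer (φ x y)) = trLeft (outer (φ x' y))) (y : 𝒴) :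
    specEnt (blockY P φ y) = (∑ x, P (x, y) * specEnt (trLeft (outer (φ x y))))
      - margY P y * Real.logb 2 (margY P y) := by
  have h1 : specEnt (blockY P φ y)
      = specEnt (∑ x, ((P (x, y) : ℝ) : ℂ) • trLeft (outer (φ x y))) := by
    rw [blockY_eq, specEnt_mul_comm, NY_conj_form P hP0, specEnt_transpose]
  rcases eq_or_lt_of_le (margY_nonneg P hP0 y) with hy | hy
  · have hPx : ∀ x, P (x, y) = 0 := by
      intro x
      have := (Finset.sum_eq_zero_iff_of_nonneg (fun x _ => hP0 (x, y))).mp hy.symm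
      exact this x (Finset.mem_univ x)
    rw [h1]
    simp [hPx, specEnt_zero, ← hy]
  · obtain ⟨x₀, -, hx₀⟩ : ∃ x ∈ Finset.univ, 0 < P (x, y) := by
      by_contra hcon
      push_neg at hcon
      have : margY P y ≤ 0 := Finset.sum_nonpos fun x hx => hcon x hx
      linarith
    have hsum : (∑ x, ((P (x, y) : ℝ) : ℂ) • trLeft (outer (φ x y)))
        = ((margY P y : ℝ) : ℂ) • trLeft (outer (φ x₀ y)) := by
      have : ∀ x ∈ Finset.univ, ((P (x, y) : ℝ) : ℂ) • trLeft (outer (φ x y))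
          = ((P (x, y) : ℝ) : ℂ) • trLeft (outer (φ x₀ y)) := by
        intro x _
        rcases eq_or_lt_of_le (hP0 (x, y)) with h0 | h0
        · rw [← h0]; simp
        · rw [hcorrB x x₀ y h0 hx₀]
      rw [Finset.sum_congr rfl this, ← Finset.sum_smul, margY]
      push_cast
      rfl
    have hT : (trLeft (outer (φ x₀ y))).IsHermitian := isHermitian_trLeft_outer _
    have hTr : ∑ i, hT.eigenvalues i = 1 :=
      sum_eig_one hT (trace_trLeft_outer _ (hunit x₀ y hx₀))
    rw [h1, hsum, specEnt_real_smul hT hy, hTr, mul_one]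
    congr 1
    rw [margY, Finset.sum_mul]
    refine Finset.sum_congr rfl fun x _ => ?_
    rcases eq_or_lt_of_le (hP0 (x, y)) with h0 | h0
    · rw [← h0]; ring
    · rw [hcorrB x x₀ y h0 hx₀]

end Main


section Assemble

variable {𝒳 𝒴 : Type*} [Fintype 𝒳] [Fintype 𝒴] [DecidableEq 𝒳] [DecidableEq 𝒴] {dA dB : ℕ}

lemma isHermitian_blockDiagonal' {o m : Type*} [Fintype o] [DecidableEq o] [Fintype m]
    [DecidableEq m] (M : o → Matrix m m ℂ) (h : ∀ k, (M k).IsHermitian) :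
    (Matrix.blockDiagonal M).IsHermitian := by
  have : (Matrix.blockDiagonal M)ᴴ = Matrix.blockDiagonal M := by
    rw [Matrix.blockDiagonal_conjTranspose]
    exact congrArg Matrix.blockDiagonal (funext fun k => h k)
  exact this

lemma isHermitian_blockX (P : 𝒳 × 𝒴 → ℝ) (φ : 𝒳 → 𝒴 → Fin dA × Fin dB → ℂ) (x : 𝒳) :
    (blockX P φ x).IsHermitian := by
  rw [blockX_eq]; exact Matrix.isHermitian_mul_conjTranspose_self _

lemma isHermitian_blockY (P : 𝒳 × 𝒴 → ℝ) (φ : 𝒳 → 𝒴 → Fin dA × Fin dB → ℂ) (y : 𝒴) :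
    (blockY P φ y).IsHermitian := by
  rw [blockY_eq]; exact Matrix.isHermitian_mul_conjTranspose_self _

lemma SXBB_eq (P : 𝒳 × 𝒴 → ℝ) (hP0 : ∀ p, 0 ≤ P p)
    (φ : 𝒳 → 𝒴 → Fin dA × Fin dB → ℂ)
    (hunit : ∀ x y, 0 < P (x, y) → ∑ v, ‖φ x y v‖ ^ 2 = 1)
    (hcorrA : ∀ x y y', 0 < P (x, y) → 0 < P (x, y') →
      trRight (outer (φ x y)) = trRight (outer (φ x y'))) :
    SXBB P φ = vonNeumannEntropy (∑ x, blockX P φ x)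
      - ∑ pt : 𝒳 × 𝒴, P pt * specEnt (trRight (outer (φ pt.1 pt.2))) := by
  have hD : vonNeumannEntropy (Matrix.blockDiagonal (blockX P φ))
      = ∑ x, specEnt (blockX P φ x) := by
    rw [vonNeumannEntropy_eq_specEnt (isHermitian_blockDiagonal' _ (isHermitian_blockX P φ)),
      specEnt_blockDiagonal]
  have hsum : ∑ x, specEnt (blockX P φ x)
      = (∑ pt : 𝒳 × 𝒴, P pt * specEnt (trRight (outer (φ pt.1 pt.2))))
        + shannonEntropy (margX P) := by
    rw [Fintype.sum_prod_type, shannonEntropy,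
      Finset.sum_congr rfl (fun x _ => specEnt_blockX_eq P hP0 φ hunit hcorrA x),
      Finset.sum_sub_distrib]
    ring
  rw [SXBB, hD, hsum]
  ring

lemma SAAY_eq (P : 𝒳 × 𝒴 → ℝ) (hP0 : ∀ p, 0 ≤ P p)
    (φ : 𝒳 → 𝒴 → Fin dA × Fin dB → ℂ)
    (hunit : ∀ x y, 0 < P (x, y) → ∑ v, ‖φ x y v‖ ^ 2 = 1)
    (hcorrB : ∀ x x' y, 0 < P (x, y) → 0 < P (x', y) →
      trLeft (outer (φ x y)) = trLeft (outer (φ x' y))) :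
    SAAY P φ = vonNeumannEntropy (∑ y, blockY P φ y)
      - ∑ pt : 𝒳 × 𝒴, P pt * specEnt (trLeft (outer (φ pt.1 pt.2))) := by
  have hD : vonNeumannEntropy (Matrix.blockDiagonal (blockY P φ))
      = ∑ y, specEnt (blockY P φ y) := by
    rw [vonNeumannEntropy_eq_specEnt (isHermitian_blockDiagonal' _ (isHermitian_blockY P φ)),
      specEnt_blockDiagonal]
  have hsum : ∑ y, specEnt (blockY P φ y)
      = (∑ pt : 𝒳 × 𝒴, P pt * specEnt (trLeft (outer (φ pt.1 pt.2))))
        + shannonEntropy (margY P) := by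
    rw [Fintype.sum_prod_type, shannonEntropy,
      Finset.sum_congr rfl (fun y _ => specEnt_blockY_eq P hP0 φ hunit hcorrB y),
      Finset.sum_sub_distrib, Finset.sum_comm]
    ring
  rw [SAAY, hD, hsum]
  ring

lemma SXBB_eq_SAAY (P : 𝒳 × 𝒴 → ℝ) (hP0 : ∀ p, 0 ≤ P p)
    (φ : 𝒳 → 𝒴 → Fin dA × Fin dB → ℂ)
    (hunit : ∀ x y, 0 < P (x, y) → ∑ v, ‖φ x y v‖ ^ 2 = 1)
    (hcorrA : ∀ x y y', 0 < P (x, y) → 0 < P (x, y') →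
      trRight (outer (φ x y)) = trRight (outer (φ x y')))
    (hcorrB : ∀ x x' y, 0 < P (x, y) → 0 < P (x', y) →
      trLeft (outer (φ x y)) = trLeft (outer (φ x' y))) :
    SXBB P φ = SAAY P φ := by
  rw [SXBB_eq P hP0 φ hunit hcorrA, SAAY_eq P hP0 φ hunit hcorrB]
  have h1 : vonNeumannEntropy (∑ x, blockX P φ x) = vonNeumannEntropy (∑ y, blockY P φ y) := by
    have hermX : (∑ x, blockX P φ x).IsHermitian := by
      rw [sum_blockX_eq]; exact Matrix.isHermitian_mul_conjTranspose_self _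
    have hermY : (∑ y, blockY P φ y).IsHermitian := by
      rw [sum_blockY_eq]
      have h : ((WM P φ)ᴴ * WM P φ).IsHermitian := by
        have := Matrix.isHermitian_mul_conjTranspose_self (WM P φ)ᴴ
        simpa using this
      exact Matrix.IsHermitian.transpose h
    rw [vonNeumannEntropy_eq_specEnt hermX, vonNeumannEntropy_eq_specEnt hermY]
    have e1 : specEnt (∑ x, blockX P φ x) = specEnt (WM P φ * (WM P φ)ᴴ) := by
      rw [sum_blockX_eq]
    have e2 : specEnt (∑ y, blockY P φ y) = specEnt (((WM P φ)ᴴ * WM P φ)ᵀ) := by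
      rw [sum_blockY_eq]
    rw [e1, e2, specEnt_transpose, specEnt_mul_comm]
  rw [h1]
  congr 1
  refine Finset.sum_congr rfl fun pt _ => ?_
  rw [specEnt_trLeft_eq_trRight]

end Assemble


end LeakAux

/-- symmetry of leakage: for every embedding
`|ψ⟩ = Σ_{x,y} √P(x,y)|x⟩_A|y⟩_B|φ^{x,y}⟩_{A'B'}` of a pmf `P`, given as unit vectors
`φ^{x,y}` satisfying strict correctness (`tr_{B'}|φ^{x,y}⟩⟨φ^{x,y}|` depends only on `x`
and `tr_{A'}|φ^{x,y}⟩⟨φ^{x,y}|` depends only on `y` on the support of `P`),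
the two leakage quantities coincide:
`S(X;BB') − I(X;Y) = S(AA';Y) − I(X;Y)`; in particular their maximum is the first. -/
theorem leakage_symmetric {dA dB : ℕ}
    (P : 𝒳 × 𝒴 → ℝ) (hP0 : ∀ p, 0 ≤ P p) (hP1 : ∑ p, P p = 1)
    (φ : 𝒳 → 𝒴 → Fin dA × Fin dB → ℂ)
    (hunit : ∀ x y, 0 < P (x, y) → ∑ v, ‖φ x y v‖ ^ 2 = 1)
    (hcorrA : ∀ x y y', 0 < P (x, y) → 0 < P (x, y') →
      trRight (outer (φ x y)) = trRight (outer (φ x y')))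
    (hcorrB : ∀ x x' y, 0 < P (x, y) → 0 < P (x', y) →
      trLeft (outer (φ x y)) = trLeft (outer (φ x' y))) :
    SXBB P φ - mutualInfo P = SAAY P φ - mutualInfo P ∧
    max (SXBB P φ - mutualInfo P) (SAAY P φ - mutualInfo P) =
      SXBB P φ - mutualInfo P := by
  have hXY := LeakAux.SXBB_eq_SAAY P hP0 φ hunit hcorrA hcorrB
  exact ⟨by rw [hXY], by rw [hXY, max_self]⟩

end
end

section
/- Let r ≥ 1 and let P^{ROT^r} be the pmf on {0,1}^r × ({0,1}^r ∪ {⊥}) with P(x,y) = 2^{−(r+1)} if y = x or y = ⊥, and 0 otherwise (randomized Rabin string oblivious transfer). For every phase function θ, the regular embedding ψ_θ of P^{ROT^r} has reduced density matrix ρ_A = tr_B|ψ_θ⟩⟨ψ_θ| with eigenvalue 1/2 + 2^{−(r+1)} of multiplicity 1 and eigenvalue 2^{−(r+1)} of multiplicity 2^r − 1. Consequently the leakage of ψ_θ is independent of θ and equals Δ_r := −(1/2 + 2^{−(r+1)})·log₂(1/2 + 2^{−(r+1)}) + (2^r − 1)(r+1)·2^{−(r+1)} − r/2. In particular, for r =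 1 every regular embedding of P^{ROT^1} has leakage exactly h(1/4) − 1/2 ≈ 0.311, where h is the binary entropy function. -/
open scoped BigOperators
open Matrix
open scoped ComplexOrder

noncomputable section

variable {𝒳 𝒴 : Type*} [Fintype 𝒳] [Fintype 𝒴] [DecidableEq 𝒳] [DecidableEq 𝒴]

/-- The regular embedding `|ψ_θ⟩ = Σ_{x,y} e^{iθ(x,y)} √P(x,y) |x⟩⊗|y⟩` of `P`. -/
def regEmbed (P : 𝒳 × 𝒴 → ℝ) (θ : 𝒳 × 𝒴 → ℝ) : 𝒳 × 𝒴 → ℂ :=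
  fun p => Complex.exp ((θ p : ℂ) * Complex.I) * (Real.sqrt (P p) : ℂ)

/-- The binary entropy function `h(q) = −q log₂ q − (1−q) log₂ (1−q)`. -/
def binEnt (q : ℝ) : ℝ := -q * Real.logb 2 q - (1 - q) * Real.logb 2 (1 - q)

/-- The Rabin string OT primitive `P^{ROT^r}`: a pmf on
`{0,1}^r × ({0,1}^r ∪ {⊥})`, with `⊥ = none`. -/
def Prot (r : ℕ) : (Fin r → Bool) × Option (Fin r → Bool) → ℝ := fun p =>
  match p.2 with
  | none => (2 : ℝ) ^ (-(r + 1 : ℤ))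
  | some y => if y = p.1 then (2 : ℝ) ^ (-(r + 1 : ℤ)) else 0

/-- The common leakage `Δ_r` of the regular embeddings of `P^{ROT^r}`. -/
def rotLeakage (r : ℕ) : ℝ :=
  -(1 / 2 + 2 ^ (-(r + 1 : ℤ))) * Real.logb 2 (1 / 2 + 2 ^ (-(r + 1 : ℤ))) +
    ((2 : ℝ) ^ r - 1) * (r + 1) * 2 ^ (-(r + 1 : ℤ)) - r / 2

section RotFoundation
open Matrix Polynomial

lemma charpoly_similar {n : Type*} [Fintype n] [DecidableEq n] (V A W : Matrix n n ℂ)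
    (h1 : V * W = 1) : (V * A * W).charpoly = A.charpoly := by
  have hmap : ∀ B : Matrix n n ℂ, (C : ℂ →+* ℂ[X]).mapMatrix B = B.map C := fun _ => rfl
  have hch : charmatrix (V * A * W)
      = (C : ℂ →+* ℂ[X]).mapMatrix V * charmatrix A * (C : ℂ →+* ℂ[X]).mapMatrix W := by
    unfold charmatrix
    rw [mul_sub, sub_mul]
    congr 1
    · refine (?_ : _ = Matrix.scalar n (X : ℂ[X])).symm
      rw [(Matrix.scalar_commute (X : ℂ[X]) (fun r' => Commute.all _ _) _).symm.eq, mul_assoc,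
        ← _root_.map_mul, h1, _root_.map_one, mul_one]
    · rw [← _root_.map_mul, ← _root_.map_mul]
  have hW : ((C : ℂ →+* ℂ[X]).mapMatrix V).det * ((C : ℂ →+* ℂ[X]).mapMatrix W).det = 1 := by
    rw [← det_mul, ← _root_.map_mul, h1, _root_.map_one, det_one]
  simp only [Matrix.charpoly, hch, det_mul]
  ring_nf
  rw [mul_comm, ← mul_assoc, mul_comm (((C : ℂ →+* ℂ[X]).mapMatrix W).det), hW, one_mul]

lemma charpoly_diagonal {n : Type*} [Fintype n] [DecidableEq n] (d : n → ℂ) :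
    (Matrix.diagonal d).charpoly = ∏ i, (X - C (d i)) := by
  have : charmatrix (Matrix.diagonal d) = Matrix.diagonal (fun i => X - C (d i)) := by
    ext i j
    by_cases h : i = j
    · subst h; simp
    · simp [h, Matrix.diagonal_apply_ne _ h]
  rw [Matrix.charpoly, this, det_diagonal]

lemma hermitian_charpoly {n : Type*} [Fintype n] [DecidableEq n] {A : Matrix n n ℂ}
    (hA : A.IsHermitian) : A.charpoly = ∏ i, (X - C ((hA.eigenvalues i : ℝ) : ℂ)) := by
  have h1 : (hA.eigenvectorUnitary : Matrix n n ℂ) * (star hA.eigenvectorUnitary : Matrix n n ℂ) = 1 := by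
    exact_mod_cast hA.eigenvectorUnitary.2.2
  calc A.charpoly
      = ((hA.eigenvectorUnitary : Matrix n n ℂ) * Matrix.diagonal (RCLike.ofReal ∘ hA.eigenvalues)
          * (star hA.eigenvectorUnitary : Matrix n n ℂ)).charpoly := by
          conv_lhs => rw [hA.spectral_theorem, Unitary.conjStarAlgAut_apply]
    _ = (Matrix.diagonal (RCLike.ofReal ∘ hA.eigenvalues)).charpoly := charpoly_similar _ _ _ h1
    _ = _ := by rw [_root_.charpoly_diagonal]; rfl

lemma eig_multiset {n : Type*} [Fintype n] [DecidableEq n] {A : Matrix n n ℂ}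
    (hA : A.IsHermitian) (V : Matrix n n ℂ) (hV : IsUnit V.det) (d : n → ℝ)
    (hAV : A * V = V * Matrix.diagonal (fun i => (d i : ℂ))) :
    Finset.univ.val.map hA.eigenvalues = Finset.univ.val.map d := by
  have hA_eq : A = V * Matrix.diagonal (fun i => (d i : ℂ)) * V⁻¹ := by
    rw [← hAV, Matrix.mul_assoc, Matrix.mul_nonsing_inv V hV, Matrix.mul_one]
  have h1 : A.charpoly = ∏ i, (X - C ((d i : ℝ) : ℂ)) := by
    rw [hA_eq, charpoly_similar _ _ _ (Matrix.mul_nonsing_inv V hV), _root_.charpoly_diagonal]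
  have h2 := hermitian_charpoly hA
  have h3 : (Multiset.map (fun a : ℂ => X - C a) (Finset.univ.val.map (fun i => ((hA.eigenvalues i : ℝ) : ℂ)))).prod
      = (Multiset.map (fun a : ℂ => X - C a) (Finset.univ.val.map (fun i => ((d i : ℝ) : ℂ)))).prod := by
    rw [Multiset.map_map, Multiset.map_map]
    rw [← Finset.prod_eq_multiset_prod, ← Finset.prod_eq_multiset_prod]
    exact h2.symm.trans h1
  have h4 := congrArg Polynomial.roots h3
  rw [roots_multiset_prod_X_sub_C, roots_multiset_prod_X_sub_C] at h4
  apply Multiset.map_injective Complex.ofReal_injective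
  rw [Multiset.map_map, Multiset.map_map]
  exact h4


lemma trRight_isHermitian {m n : Type*} [Fintype m] [Fintype n] (ψ : m × n → ℂ) :
    (trRight (outer ψ)).IsHermitian := by
  ext i j
  show star (∑ b, _) = _
  rw [star_sum]
  refine Finset.sum_congr rfl fun b _ => ?_
  simp only [trRight, outer, star_mul', Complex.star_def, Complex.conj_conj]
  exact mul_comm _ _

lemma trLeft_isHermitian {m n : Type*} [Fintype m] [Fintype n] (ψ : m × n → ℂ) :
    (trLeft (outer ψ)).IsHermitian := by
  ext i j
  show star (∑ b, _) = _
  rw [star_sum]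
  refine Finset.sum_congr rfl fun b _ => ?_
  simp only [trLeft, outer, star_mul', Complex.star_def, Complex.conj_conj]
  exact mul_comm _ _

/-- characters of (Z/2)^r -/
def chi {r : ℕ} (s x : Fin r → Bool) : ℂ := ∏ i, (if s i && x i then -1 else 1)

lemma conj_chi {r : ℕ} (s x : Fin r → Bool) : (starRingEnd ℂ) (chi s x) = chi s x := by
  unfold chi
  rw [map_prod]
  refine Finset.prod_congr rfl fun i _ => ?_
  split_ifs <;> simp

lemma sum_chi_mul {r : ℕ} (s t : Fin r → Bool) :
    ∑ x : Fin r → Bool, chi s x * chi t x = if s = t then (2 ^ r : ℂ) else 0 := by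
  have h1 : ∀ x : Fin r → Bool, chi s x * chi t x
      = ∏ i, ((if s i && x i then (-1 : ℂ) else 1) * (if t i && x i then -1 else 1)) := by
    intro x; rw [Finset.prod_mul_distrib]; rfl
  simp only [h1]
  rw [← Fintype.prod_sum fun i b => (if s i && b then (-1 : ℂ) else 1) * (if t i && b then -1 else 1)]
  have h2 : ∀ i : Fin r, (∑ b : Bool, (if s i && b then (-1 : ℂ) else 1) * (if t i && b then -1 else 1))
      = if s i = t i then 2 else 0 := by
    intro i
    cases hs : s i <;> cases ht : t i <;> simp [Fintype.sum_bool] <;> norm_num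
  rw [Finset.prod_congr rfl fun i _ => h2 i]
  by_cases h : s = t
  · subst h
    simp [Finset.prod_const, Finset.card_univ]
  · obtain ⟨i, hi⟩ := Function.ne_iff.mp h
    rw [if_neg h]
    exact Finset.prod_eq_zero (Finset.mem_univ i) (if_neg hi)

lemma chi_zero {r : ℕ} (x : Fin r → Bool) : chi (fun _ => false) x = 1 := by
  unfold chi; simp

lemma sum_chi {r : ℕ} (s : Fin r → Bool) :
    ∑ x : Fin r → Bool, chi s x = if s = (fun _ => false) then (2 ^ r : ℂ) else 0 := by
  have := sum_chi_mul s (fun _ => false)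
  simpa [chi_zero] using this

lemma logb_two_zpow (k : ℤ) : Real.logb 2 ((2 : ℝ) ^ k) = k := by
  rw [Real.logb, Real.log_zpow]
  rw [mul_div_assoc, div_self (ne_of_gt (Real.log_pos one_lt_two)), mul_one]

lemma sum_comp_eq_of_multiset_eq {α β : Type*} [Fintype α] [Fintype β] (p : α → ℝ) (q : β → ℝ)
    (h : Finset.univ.val.map p = Finset.univ.val.map q) (f : ℝ → ℝ) :
    ∑ x, f (p x) = ∑ y, f (q y) := by
  rw [Finset.sum_eq_multiset_sum, Finset.sum_eq_multiset_sum]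
  have hp : (Multiset.map (fun x => f (p x)) Finset.univ.val).sum
      = (Multiset.map f (Multiset.map p Finset.univ.val)).sum := by rw [Multiset.map_map]; rfl
  have hq : (Multiset.map (fun y => f (q y)) Finset.univ.val).sum
      = (Multiset.map f (Multiset.map q Finset.univ.val)).sum := by rw [Multiset.map_map]; rfl
  rw [hp, hq, h]

lemma shannon_eq_of_multiset_eq {α β : Type*} [Fintype α] [Fintype β] {p : α → ℝ} {q : β → ℝ}
    (h : Finset.univ.val.map p = Finset.univ.val.map q) :
    (-∑ x, p x * Real.logb 2 (p x)) = -∑ y, q y * Real.logb 2 (q y) :=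
  congrArg Neg.neg (sum_comp_eq_of_multiset_eq p q h (fun t => t * Real.logb 2 t))

end RotFoundation

section RotMain

variable (r : ℕ) (θ : (Fin r → Bool) × Option (Fin r → Bool) → ℝ)

/-- the value 2^{-(r+1)} -/
def bR : ℝ := (2 : ℝ) ^ (-(r + 1 : ℤ))
/-- the value 1/2 + 2^{-(r+1)} -/
def aR : ℝ := 1 / 2 + bR r

lemma bR_pos : 0 < bR r := zpow_pos two_pos _

lemma bR_mul_pow : (2 : ℝ) ^ r * bR r = 1 / 2 := by
  rw [bR, ← zpow_natCast (2:ℝ) r, ← zpow_add₀ (two_ne_zero)]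
  norm_num

/-- the phase -/
def uPh (p : (Fin r → Bool) × Option (Fin r → Bool)) : ℂ :=
  Complex.exp ((θ p : ℂ) * Complex.I)

lemma uPh_mul_conj (p) : uPh r θ p * (starRingEnd ℂ) (uPh r θ p) = 1 := by
  rw [uPh, ← Complex.exp_conj, _root_.map_mul, Complex.conj_I, Complex.conj_ofReal,
    ← Complex.exp_add]
  simp

lemma conj_mul_uPh (p) : (starRingEnd ℂ) (uPh r θ p) * uPh r θ p = 1 := by
  rw [mul_comm]; exact uPh_mul_conj r θ p

lemma sqrt_bR_sq : (Real.sqrt (bR r) : ℂ) * (Real.sqrt (bR r) : ℂ) = (bR r : ℂ) := by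
  rw [← Complex.ofReal_mul, Real.mul_self_sqrt (bR_pos r).le]

lemma psi_none (x) : regEmbed (Prot r) θ (x, none) = uPh r θ (x, none) * (Real.sqrt (bR r) : ℂ) := rfl

lemma psi_some (x z) : regEmbed (Prot r) θ (x, some z)
    = if z = x then uPh r θ (x, some z) * (Real.sqrt (bR r) : ℂ) else 0 := by
  rw [regEmbed]
  show Complex.exp _ * ((Real.sqrt (if z = x then bR r else 0) : ℝ) : ℂ) = _
  split_ifs with h
  · rfl
  · simp

lemma rhoA_apply (x x') : trRight (outer (regEmbed (Prot r) θ)) x x'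
    = (bR r : ℂ) * (uPh r θ (x, none) * (starRingEnd ℂ) (uPh r θ (x', none)))
      + if x = x' then (bR r : ℂ) else 0 := by
  rw [trRight]
  show (∑ y : Option (Fin r → Bool), outer (regEmbed (Prot r) θ) (x, y) (x', y)) = _
  rw [Fintype.sum_option]
  have h1 : outer (regEmbed (Prot r) θ) (x, none) (x', none)
      = (bR r : ℂ) * (uPh r θ (x, none) * (starRingEnd ℂ) (uPh r θ (x', none))) := by
    rw [outer, psi_none, psi_none, _root_.map_mul, Complex.conj_ofReal]
    rw [show ∀ a b c d : ℂ, a * b * (c * d) = (b * d) * (a * c) by intros; ring, sqrt_bR_sq]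
  have h2 : ∀ z, outer (regEmbed (Prot r) θ) (x, some z) (x', some z)
      = if z = x then (if z = x' then uPh r θ (x, some z) * (starRingEnd ℂ) (uPh r θ (x', some z)) * (bR r : ℂ) else 0) else 0 := by
    intro z
    rw [outer, psi_some, psi_some]
    split_ifs with h h' <;> simp_all
    rw [show ∀ a b c d : ℂ, a * b * (c * d) = a * c * (b * d) by intros; ring, sqrt_bR_sq]
  rw [h1, Finset.sum_congr rfl (fun z _ => h2 z), Finset.sum_ite_eq' Finset.univ x]
  simp only [Finset.mem_univ, if_true]
  by_cases h : x = x'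
  · subst h
    rw [if_pos rfl, if_pos rfl, uPh_mul_conj, uPh_mul_conj]
    ring
  · rw [if_neg h, if_neg h]


/-- zero element of (Fin r → Bool) -/
def zv : Fin r → Bool := fun _ => false

/-- diagonalizing matrix for ρ_A -/
def VA : Matrix (Fin r → Bool) (Fin r → Bool) ℂ :=
  fun x s => uPh r θ (x, none) * chi s x

/-- eigenvalue function for ρ_A -/
def dA : (Fin r → Bool) → ℝ := fun s => if s = zv r then aR r else bR r

lemma rhoA_mul_VA : trRight (outer (regEmbed (Prot r) θ)) * VA r θ
    = VA r θ * Matrix.diagonal (fun s => ((dA r s : ℝ) : ℂ)) := by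
  ext x s
  rw [Matrix.mul_apply, Matrix.mul_diagonal]
  have key : ∀ x' : Fin r → Bool,
      trRight (outer (regEmbed (Prot r) θ)) x x' * VA r θ x' s
      = (bR r : ℂ) * uPh r θ (x, none) * chi s x'
        + (if x = x' then (bR r : ℂ) * (uPh r θ (x', none) * chi s x') else 0) := by
    intro x'
    rw [rhoA_apply, VA, add_mul, ite_mul, zero_mul]
    congr 1
    rw [show (bR r : ℂ) * (uPh r θ (x, none) * (starRingEnd ℂ) (uPh r θ (x', none)))
          * (uPh r θ (x', none) * chi s x')
        = (bR r : ℂ) * uPh r θ (x, none) * chi s x'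
          * ((starRingEnd ℂ) (uPh r θ (x', none)) * uPh r θ (x', none)) by ring,
      conj_mul_uPh, mul_one]
  rw [Finset.sum_congr rfl fun x' _ => key x', Finset.sum_add_distrib,
    ← Finset.mul_sum, sum_chi, Finset.sum_ite_eq Finset.univ x]
  simp only [Finset.mem_univ, if_true]
  rw [VA, dA]
  by_cases h : s = zv r
  · subst h
    rw [if_pos rfl, if_pos (show (zv r) = (fun _ => false) from rfl)]
    have hz : chi (zv r) x = 1 := chi_zero x
    rw [hz]
    have : ((aR r : ℝ) : ℂ) = (bR r : ℂ) * (2 ^ r : ℂ) + (bR r : ℂ) := by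
      rw [aR]
      push_cast
      rw [show ((bR r : ℝ) : ℂ) * 2 ^ r = (((2:ℝ) ^ r * bR r : ℝ) : ℂ) by push_cast; ring,
        bR_mul_pow]
      push_cast; ring
    rw [this]
    ring
  · rw [if_neg h, if_neg (show ¬ s = (fun _ => false) from h)]
    ring

lemma star_VA_mul_VA : star (VA r θ) * VA r θ
    = Matrix.diagonal (fun _ => ((2 : ℂ) ^ r)) := by
  ext s t
  rw [Matrix.mul_apply]
  have key : ∀ x, star (VA r θ) s x * VA r θ x t = chi s x * chi t x := by
    intro x
    rw [Matrix.star_apply, VA, VA, star_mul']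
    simp only [Complex.star_def]
    rw [conj_chi,
      show (starRingEnd ℂ) (uPh r θ (x, none)) * chi s x * (uPh r θ (x, none) * chi t x)
        = ((starRingEnd ℂ) (uPh r θ (x, none)) * uPh r θ (x, none)) * (chi s x * chi t x) by ring,
      conj_mul_uPh, one_mul]
  rw [Finset.sum_congr rfl fun x _ => key x, sum_chi_mul]
  by_cases h : s = t
  · subst h; simp
  · rw [if_neg h, Matrix.diagonal_apply_ne _ h]

lemma VA_det_isUnit : IsUnit (VA r θ).det := by
  rw [isUnit_iff_ne_zero]
  intro hdet
  have := congrArg Matrix.det (star_VA_mul_VA r θ)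
  rw [Matrix.det_mul, hdet, mul_zero, Matrix.det_diagonal, Finset.prod_const] at this
  have h2 : ((2 : ℂ) ^ r) ^ (Finset.univ : Finset (Fin r → Bool)).card ≠ 0 :=
    pow_ne_zero _ (pow_ne_zero _ two_ne_zero)
  exact h2 this.symm

lemma eigA_multiset (hA : (trRight (outer (regEmbed (Prot r) θ))).IsHermitian) :
    Finset.univ.val.map hA.eigenvalues = Finset.univ.val.map (dA r) :=
  eig_multiset hA (VA r θ) (VA_det_isUnit r θ) (dA r) (rhoA_mul_VA r θ)

lemma dA_multiset :
    Finset.univ.val.map (dA r) =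
      ((1 / 2 + 2 ^ (-(r + 1 : ℤ)) : ℝ)) ::ₘ
        Multiset.replicate (2 ^ r - 1) ((2 : ℝ) ^ (-(r + 1 : ℤ))) := by
  have hmem : zv r ∈ (Finset.univ.val : Multiset (Fin r → Bool)) := Finset.mem_univ _
  rw [← Multiset.cons_erase hmem, Multiset.map_cons]
  have h0 : dA r (zv r) = 1 / 2 + 2 ^ (-(r + 1 : ℤ)) := by rw [dA, if_pos rfl]; rfl
  rw [h0]
  congr 1
  have : ∀ s ∈ (Finset.univ.val : Multiset (Fin r → Bool)).erase (zv r),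
      dA r s = (2 : ℝ) ^ (-(r + 1 : ℤ)) := by
    intro s hs
    have hne := (Multiset.Nodup.mem_erase_iff Finset.univ.nodup).mp hs |>.1
    rw [dA, if_neg hne]; rfl
  rw [Multiset.map_congr rfl this, Multiset.map_const',
    Multiset.card_erase_of_mem hmem]
  congr 1
  rw [show (Finset.univ.val : Multiset (Fin r → Bool)).card = Fintype.card (Fin r → Bool) from rfl,
    Fintype.card_fun]
  simp


/-- relative phase for the B side -/
def gB (z : Fin r → Bool) : ℂ := uPh r θ (z, some z) * (starRingEnd ℂ) (uPh r θ (z, none))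

lemma gB_mul_conj (z) : gB r θ z * (starRingEnd ℂ) (gB r θ z) = 1 := by
  rw [gB, _root_.map_mul, Complex.conj_conj,
    show uPh r θ (z, some z) * (starRingEnd ℂ) (uPh r θ (z, none))
        * ((starRingEnd ℂ) (uPh r θ (z, some z)) * uPh r θ (z, none))
      = (uPh r θ (z, some z) * (starRingEnd ℂ) (uPh r θ (z, some z)))
        * ((starRingEnd ℂ) (uPh r θ (z, none)) * uPh r θ (z, none)) by ring,
    uPh_mul_conj, conj_mul_uPh, one_mul]

lemma conj_mul_gB (z) : (starRingEnd ℂ) (gB r θ z) * gB r θ z = 1 := by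
  rw [mul_comm]; exact gB_mul_conj r θ z

lemma rhoB_ss (z z') : trLeft (outer (regEmbed (Prot r) θ)) (some z) (some z')
    = if z' = z then (bR r : ℂ) else 0 := by
  rw [trLeft]
  have h : ∀ x, outer (regEmbed (Prot r) θ) (x, some z) (x, some z')
      = if z = x then (if z' = x then uPh r θ (x, some z) * (Real.sqrt (bR r) : ℂ)
          * (starRingEnd ℂ) (uPh r θ (x, some z') * (Real.sqrt (bR r) : ℂ)) else 0) else 0 := by
    intro x
    rw [outer, psi_some, psi_some]
    split_ifs <;> simp
  rw [Finset.sum_congr rfl fun x _ => h x, Finset.sum_ite_eq]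
  simp only [Finset.mem_univ, if_true]
  by_cases hzz : z' = z
  · subst hzz
    rw [if_pos rfl, if_pos rfl, _root_.map_mul, Complex.conj_ofReal,
      show ∀ a b c d : ℂ, a * b * (c * d) = (a * c) * (b * d) by intros; ring,
      uPh_mul_conj, one_mul, sqrt_bR_sq]
  · rw [if_neg hzz, if_neg hzz]

lemma rhoB_sn (z) : trLeft (outer (regEmbed (Prot r) θ)) (some z) none
    = (bR r : ℂ) * gB r θ z := by
  rw [trLeft]
  have h : ∀ x, outer (regEmbed (Prot r) θ) (x, some z) (x, none)
      = if z = x then uPh r θ (x, some z) * (Real.sqrt (bR r) : ℂ)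
          * (starRingEnd ℂ) (uPh r θ (x, none) * (Real.sqrt (bR r) : ℂ)) else 0 := by
    intro x
    rw [outer, psi_some, psi_none]
    split_ifs <;> simp
  rw [Finset.sum_congr rfl fun x _ => h x, Finset.sum_ite_eq]
  simp only [Finset.mem_univ, if_true]
  rw [_root_.map_mul, Complex.conj_ofReal, gB,
    show ∀ a b c d : ℂ, a * b * (c * d) = (a * c) * (b * d) by intros; ring, sqrt_bR_sq]
  ring

lemma rhoB_ns (z') : trLeft (outer (regEmbed (Prot r) θ)) none (some z')
    = (bR r : ℂ) * (starRingEnd ℂ) (gB r θ z') := by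
  rw [trLeft]
  have h : ∀ x, outer (regEmbed (Prot r) θ) (x, none) (x, some z')
      = if z' = x then uPh r θ (x, none) * (Real.sqrt (bR r) : ℂ)
          * (starRingEnd ℂ) (uPh r θ (x, some z') * (Real.sqrt (bR r) : ℂ)) else 0 := by
    intro x
    rw [outer, psi_some, psi_none]
    split_ifs <;> simp
  rw [Finset.sum_congr rfl fun x _ => h x, Finset.sum_ite_eq]
  simp only [Finset.mem_univ, if_true]
  rw [_root_.map_mul, Complex.conj_ofReal, gB, _root_.map_mul, Complex.conj_conj,
    show ∀ a b c d : ℂ, a * b * (c * d) = (a * c) * (b * d) by intros; ring, sqrt_bR_sq]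
  ring

lemma rhoB_nn : trLeft (outer (regEmbed (Prot r) θ)) none none = (2 ^ r : ℂ) * (bR r : ℂ) := by
  rw [trLeft]
  have h : ∀ x, outer (regEmbed (Prot r) θ) (x, none) (x, none) = (bR r : ℂ) := by
    intro x
    rw [outer, psi_none, _root_.map_mul, Complex.conj_ofReal,
      show ∀ a b c d : ℂ, a * b * (c * d) = (a * c) * (b * d) by intros; ring,
      uPh_mul_conj, one_mul, sqrt_bR_sq]
  rw [Finset.sum_congr rfl fun x _ => h x, Finset.sum_const, Finset.card_univ, Fintype.card_fun]
  simp

/-- diagonalizing matrix for ρ_B -/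
def VB : Matrix (Option (Fin r → Bool)) (Option (Fin r → Bool)) ℂ := fun y c =>
  match y, c with
  | some z, some s => gB r θ z * chi s z
  | none, some s => if s = zv r then (2 ^ r : ℂ) else 0
  | some z, none => gB r θ z
  | none, none => -1

/-- eigenvalue function for ρ_B -/
def dB : Option (Fin r → Bool) → ℝ := fun c =>
  match c with
  | some s => if s = zv r then aR r else bR r
  | none => 0

lemma rhoB_mul_VB : trLeft (outer (regEmbed (Prot r) θ)) * VB r θ
    = VB r θ * Matrix.diagonal (fun c => ((dB r c : ℝ) : ℂ)) := by
  ext y c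
  rw [Matrix.mul_apply, Matrix.mul_diagonal, Fintype.sum_option]
  match y, c with
  | some z, some s =>
    show trLeft _ (some z) none * VB r θ none (some s)
        + (∑ z', trLeft _ (some z) (some z') * VB r θ (some z') (some s)) = _
    rw [rhoB_sn]
    have h : ∀ z', trLeft (outer (regEmbed (Prot r) θ)) (some z) (some z')
          * VB r θ (some z') (some s)
        = if z' = z then (bR r : ℂ) * (gB r θ z' * chi s z') else 0 := by
      intro z'
      rw [rhoB_ss, ite_mul, zero_mul]
      rfl
    rw [Finset.sum_congr rfl fun z' _ => h z', Finset.sum_ite_eq' Finset.univ z]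
    simp only [Finset.mem_univ, if_true]
    show (bR r : ℂ) * gB r θ z * (if s = zv r then (2 ^ r : ℂ) else 0)
        + (bR r : ℂ) * (gB r θ z * chi s z)
      = gB r θ z * chi s z * ((if s = zv r then aR r else bR r : ℝ) : ℂ)
    by_cases hs : s = zv r
    · subst hs
      have hz : chi (zv r) z = 1 := chi_zero z
      rw [if_pos rfl, if_pos rfl, hz]
      have : ((aR r : ℝ) : ℂ) = (bR r : ℂ) * (2 ^ r : ℂ) + (bR r : ℂ) := by
        rw [aR]
        push_cast
        rw [show ((bR r : ℝ) : ℂ) * 2 ^ r = (((2:ℝ) ^ r * bR r : ℝ) : ℂ) by push_cast; ring,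
          bR_mul_pow]
        push_cast; ring
      rw [this]
      ring
    · rw [if_neg hs, if_neg hs]
      ring
  | some z, none =>
    show trLeft _ (some z) none * VB r θ none none
        + (∑ z', trLeft _ (some z) (some z') * VB r θ (some z') none) = _
    rw [rhoB_sn]
    have h : ∀ z', trLeft (outer (regEmbed (Prot r) θ)) (some z) (some z')
          * VB r θ (some z') none
        = if z' = z then (bR r : ℂ) * gB r θ z' else 0 := by
      intro z'
      rw [rhoB_ss, ite_mul, zero_mul]
      rfl
    rw [Finset.sum_congr rfl fun z' _ => h z', Finset.sum_ite_eq' Finset.univ z]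
    simp only [Finset.mem_univ, if_true]
    show (bR r : ℂ) * gB r θ z * (-1) + (bR r : ℂ) * gB r θ z
      = gB r θ z * ((0 : ℝ) : ℂ)
    push_cast
    ring
  | none, some s =>
    show trLeft _ none none * VB r θ none (some s)
        + (∑ z', trLeft _ none (some z') * VB r θ (some z') (some s)) = _
    rw [rhoB_nn]
    have h : ∀ z', trLeft (outer (regEmbed (Prot r) θ)) none (some z')
          * VB r θ (some z') (some s) = (bR r : ℂ) * chi s z' := by
      intro z'
      rw [rhoB_ns]
      show (bR r : ℂ) * (starRingEnd ℂ) (gB r θ z') * (gB r θ z' * chi s z') = _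
      rw [show (bR r : ℂ) * (starRingEnd ℂ) (gB r θ z') * (gB r θ z' * chi s z')
          = (bR r : ℂ) * chi s z' * ((starRingEnd ℂ) (gB r θ z') * gB r θ z') by ring,
        conj_mul_gB, mul_one]
    rw [Finset.sum_congr rfl fun z' _ => h z', ← Finset.mul_sum, sum_chi]
    show (2 ^ r : ℂ) * (bR r : ℂ) * (if s = zv r then (2 ^ r : ℂ) else 0)
        + (bR r : ℂ) * (if s = (fun _ => false) then (2 ^ r : ℂ) else 0)
      = (if s = zv r then (2 ^ r : ℂ) else 0) * ((if s = zv r then aR r else bR r : ℝ) : ℂ)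
    by_cases hs : s = zv r
    · simp only [if_pos hs, if_pos (show s = (fun _ => false) from hs)]
      have : ((aR r : ℝ) : ℂ) = (bR r : ℂ) * (2 ^ r : ℂ) + (bR r : ℂ) := by
        rw [aR]
        push_cast
        rw [show ((bR r : ℝ) : ℂ) * 2 ^ r = (((2:ℝ) ^ r * bR r : ℝ) : ℂ) by push_cast; ring,
          bR_mul_pow]
        push_cast; ring
      rw [this]
      ring
    · simp only [if_neg hs, if_neg (show ¬ s = (fun _ => false) from hs)]
      ring
  | none, none =>
    show trLeft _ none none * VB r θ none none
        + (∑ z', trLeft _ none (some z') * VB r θ (some z') none) = _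
    rw [rhoB_nn]
    have h : ∀ z', trLeft (outer (regEmbed (Prot r) θ)) none (some z')
          * VB r θ (some z') none = (bR r : ℂ) := by
      intro z'
      rw [rhoB_ns]
      show (bR r : ℂ) * (starRingEnd ℂ) (gB r θ z') * gB r θ z' = _
      rw [mul_assoc, conj_mul_gB, mul_one]
    rw [Finset.sum_congr rfl fun z' _ => h z', Finset.sum_const, Finset.card_univ,
      Fintype.card_fun]
    simp only [Fintype.card_bool, Fintype.card_fin, nsmul_eq_mul]
    show (2 ^ r : ℂ) * (bR r : ℂ) * (-1) + ((2 ^ r : ℕ) : ℂ) * (bR r : ℂ) = (-1) * ((0 : ℝ) : ℂ)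
    push_cast
    ring


/-- diagonal of star VB * VB -/
def wB : Option (Fin r → Bool) → ℂ := fun c =>
  match c with
  | some s => (2 ^ r : ℂ) + (if s = zv r then (2 ^ r : ℂ) * (2 ^ r : ℂ) else 0)
  | none => (2 ^ r : ℂ) + 1

lemma star_ite_N (s : Fin r → Bool) :
    star (if s = zv r then (2 ^ r : ℂ) else 0) = (if s = zv r then (2 ^ r : ℂ) else 0) := by
  split_ifs <;> simp

lemma star_VB_mul_VB : star (VB r θ) * VB r θ = Matrix.diagonal (wB r) := by
  ext c c'
  rw [Matrix.mul_apply, Fintype.sum_option]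
  have key : ∀ (s t : Fin r → Bool) (z : Fin r → Bool),
      star (VB r θ) (some s) (some z) * VB r θ (some z) (some t) = chi s z * chi t z := by
    intro s t z
    show star (gB r θ z * chi s z) * (gB r θ z * chi t z) = _
    rw [star_mul']
    simp only [Complex.star_def]
    rw [conj_chi,
      show (starRingEnd ℂ) (gB r θ z) * chi s z * (gB r θ z * chi t z)
        = ((starRingEnd ℂ) (gB r θ z) * gB r θ z) * (chi s z * chi t z) by ring,
      conj_mul_gB, one_mul]
  match c, c' with
  | some s, some t =>
    show star (VB r θ) (some s) none * VB r θ none (some t)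
        + (∑ z, star (VB r θ) (some s) (some z) * VB r θ (some z) (some t)) = _
    rw [Finset.sum_congr rfl fun z _ => key s t z, sum_chi_mul]
    show star (if s = zv r then (2 ^ r : ℂ) else 0) * (if t = zv r then (2 ^ r : ℂ) else 0)
        + (if s = t then (2 ^ r : ℂ) else 0) = _
    rw [star_ite_N]
    by_cases hst : s = t
    · subst hst
      rw [Matrix.diagonal_apply_eq, if_pos rfl]
      show _ = (2 ^ r : ℂ) + (if s = zv r then (2 ^ r : ℂ) * (2 ^ r : ℂ) else 0)
      by_cases hs : s = zv r
      · rw [if_pos hs, if_pos hs]; ring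
      · rw [if_neg hs, if_neg hs]; ring
    · rw [Matrix.diagonal_apply_ne _ (fun hh => hst (Option.some_injective _ hh)), if_neg hst]
      by_cases hs : s = zv r
      · rw [if_neg (show ¬ t = zv r from fun ht => hst (hs.trans ht.symm))]
        ring
      · rw [if_neg hs]; ring
  | some s, none =>
    have key2 : ∀ z, star (VB r θ) (some s) (some z) * VB r θ (some z) none = chi s z := by
      intro z
      show star (gB r θ z * chi s z) * gB r θ z = _
      rw [star_mul']
      simp only [Complex.star_def]
      rw [conj_chi, show (starRingEnd ℂ) (gB r θ z) * chi s z * gB r θ z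
          = ((starRingEnd ℂ) (gB r θ z) * gB r θ z) * chi s z by ring, conj_mul_gB, one_mul]
    show star (VB r θ) (some s) none * VB r θ none none
        + (∑ z, star (VB r θ) (some s) (some z) * VB r θ (some z) none) = _
    rw [Finset.sum_congr rfl fun z _ => key2 z, sum_chi,
      Matrix.diagonal_apply_ne _ (Option.some_ne_none s)]
    show star (if s = zv r then (2 ^ r : ℂ) else 0) * (-1)
        + (if s = (fun _ => false) then (2 ^ r : ℂ) else 0) = 0
    rw [star_ite_N]
    by_cases hs : s = zv r
    · rw [if_pos hs, if_pos (show s = (fun _ => false) from hs)]; ring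
    · rw [if_neg hs, if_neg (show ¬ s = (fun _ => false) from hs)]; ring
  | none, some t =>
    have key2 : ∀ z, star (VB r θ) none (some z) * VB r θ (some z) (some t) = chi t z := by
      intro z
      show star (gB r θ z) * (gB r θ z * chi t z) = _
      simp only [Complex.star_def]
      rw [← mul_assoc, conj_mul_gB, one_mul]
    show star (VB r θ) none none * VB r θ none (some t)
        + (∑ z, star (VB r θ) none (some z) * VB r θ (some z) (some t)) = _
    rw [Finset.sum_congr rfl fun z _ => key2 z, sum_chi,
      Matrix.diagonal_apply_ne _ (Option.some_ne_none t).symm]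
    show star (-1 : ℂ) * (if t = zv r then (2 ^ r : ℂ) else 0)
        + (if t = (fun _ => false) then (2 ^ r : ℂ) else 0) = 0
    rw [show star (-1 : ℂ) = -1 by simp]
    by_cases ht : t = zv r
    · rw [if_pos ht, if_pos (show t = (fun _ => false) from ht)]; ring
    · rw [if_neg ht, if_neg (show ¬ t = (fun _ => false) from ht)]; ring
  | none, none =>
    have key2 : ∀ z : Fin r → Bool, star (VB r θ) none (some z) * VB r θ (some z) none = 1 := by
      intro z
      show star (gB r θ z) * gB r θ z = _
      simp only [Complex.star_def]
      rw [conj_mul_gB]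
    show star (VB r θ) none none * VB r θ none none
        + (∑ z : Fin r → Bool, star (VB r θ) none (some z) * VB r θ (some z) none) = _
    rw [Finset.sum_congr rfl fun z _ => key2 z, Finset.sum_const, Finset.card_univ,
      Fintype.card_fun, Matrix.diagonal_apply_eq]
    simp only [Fintype.card_bool, Fintype.card_fin, nsmul_eq_mul, mul_one]
    show star (-1 : ℂ) * (-1) + ((2 ^ r : ℕ) : ℂ) = (2 ^ r : ℂ) + 1
    rw [show star (-1 : ℂ) = -1 by simp]
    push_cast
    ring

lemma wB_ne_zero : ∀ c, wB r c ≠ 0 := by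
  intro c
  match c with
  | some s =>
    show (2 ^ r : ℂ) + (if s = zv r then (2 ^ r : ℂ) * (2 ^ r : ℂ) else 0) ≠ 0
    by_cases hs : s = zv r
    · rw [if_pos hs, show (2 ^ r : ℂ) + (2 ^ r : ℂ) * (2 ^ r : ℂ)
          = (((2 : ℝ) ^ r + (2 : ℝ) ^ r * 2 ^ r : ℝ) : ℂ) by push_cast; ring]
      exact Complex.ofReal_ne_zero.mpr (by positivity)
    · rw [if_neg hs, add_zero]
      exact pow_ne_zero _ two_ne_zero
  | none =>
    show (2 ^ r : ℂ) + 1 ≠ 0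
    rw [show (2 ^ r : ℂ) + 1 = (((2 : ℝ) ^ r + 1 : ℝ) : ℂ) by push_cast; ring]
    exact Complex.ofReal_ne_zero.mpr (by positivity)

lemma VB_det_isUnit : IsUnit (VB r θ).det := by
  rw [isUnit_iff_ne_zero]
  intro hdet
  have := congrArg Matrix.det (star_VB_mul_VB r θ)
  rw [Matrix.det_mul, hdet, mul_zero, Matrix.det_diagonal] at this
  exact (Finset.prod_ne_zero_iff.mpr fun c _ => wB_ne_zero r c) this.symm

lemma eigB_multiset (hB : (trLeft (outer (regEmbed (Prot r) θ))).IsHermitian) :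
    Finset.univ.val.map hB.eigenvalues = Finset.univ.val.map (dB r) :=
  eig_multiset hB (VB r θ) (VB_det_isUnit r θ) (dB r) (rhoB_mul_VB r θ)

lemma logb_bR : Real.logb 2 (bR r) = -(r + 1 : ℝ) := by
  rw [bR, logb_two_zpow]
  push_cast
  ring

lemma card_real : ((Finset.univ : Finset (Fin r → Bool)).card : ℝ) = (2 : ℝ) ^ r := by
  rw [Finset.card_univ, Fintype.card_fun]
  simp only [Fintype.card_bool, Fintype.card_fin]
  push_cast
  ring

lemma shannon_dB : (-∑ c, dB r c * Real.logb 2 (dB r c))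
    = -(aR r * Real.logb 2 (aR r)) + ((2 : ℝ) ^ r - 1) * (r + 1) * bR r := by
  rw [Fintype.sum_option]
  have h0 : dB r none * Real.logb 2 (dB r none) = 0 := by
    show (0 : ℝ) * _ = 0
    rw [zero_mul]
  have h : ∀ s, dB r (some s) * Real.logb 2 (dB r (some s))
      = (if s = zv r then aR r * Real.logb 2 (aR r) - bR r * Real.logb 2 (bR r) else 0)
        + bR r * Real.logb 2 (bR r) := by
    intro s
    show (if s = zv r then aR r else bR r) * Real.logb 2 (if s = zv r then aR r else bR r) = _
    split_ifs <;> ring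
  rw [h0, Finset.sum_congr rfl fun s _ => h s, Finset.sum_add_distrib,
    Finset.sum_ite_eq' Finset.univ (zv r), Finset.sum_const, nsmul_eq_mul, card_real]
  simp only [Finset.mem_univ, if_true]
  rw [logb_bR]
  ring

end RotMain


section RotFinal

variable (r : ℕ) (θ : (Fin r → Bool) × Option (Fin r → Bool) → ℝ)

lemma two_mul_bR : 2 * bR r = (2 : ℝ) ^ (-(r : ℤ)) := by
  rw [bR, show (-(r : ℤ)) = 1 + -(r + 1 : ℤ) by ring,
    zpow_add₀ (by norm_num : (2:ℝ) ≠ 0), zpow_one]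

lemma logb_two_mul_bR : Real.logb 2 (2 * bR r) = -(r : ℝ) := by
  rw [two_mul_bR, logb_two_zpow]
  push_cast
  ring

lemma margX_eq (x : Fin r → Bool) : margX (Prot r) x = 2 * bR r := by
  rw [margX, Fintype.sum_option]
  show bR r + (∑ z, if z = x then bR r else 0) = _
  rw [Finset.sum_ite_eq' Finset.univ x]
  simp only [Finset.mem_univ, if_true]
  ring

lemma shannon_margX : shannonEntropy (margX (Prot r)) = (r : ℝ) := by
  show (-∑ x, margX (Prot r) x * Real.logb 2 (margX (Prot r) x)) = (r : ℝ)
  have h : ∀ x : Fin r → Bool, margX (Prot r) x * Real.logb 2 (margX (Prot r) x)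
      = 2 * bR r * (-(r : ℝ)) := by
    intro x
    rw [margX_eq, logb_two_mul_bR]
  rw [Finset.sum_congr rfl fun x _ => h x, Finset.sum_const, nsmul_eq_mul, card_real]
  linear_combination 2 * (r : ℝ) * bR_mul_pow r

lemma margY_none : margY (Prot r) none = 1 / 2 := by
  rw [margY]
  show (∑ _x : Fin r → Bool, bR r) = _
  rw [Finset.sum_const, nsmul_eq_mul, card_real]
  exact bR_mul_pow r

lemma margY_some (z : Fin r → Bool) : margY (Prot r) (some z) = bR r := by
  rw [margY]
  show (∑ x, if z = x then bR r else 0) = _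
  rw [Finset.sum_ite_eq Finset.univ z]
  simp only [Finset.mem_univ, if_true]

lemma logb_half : Real.logb 2 (1 / 2 : ℝ) = -1 := by
  rw [show (1 / 2 : ℝ) = (2 : ℝ) ^ (-1 : ℤ) by norm_num, logb_two_zpow]
  norm_num

lemma shannon_margY : shannonEntropy (margY (Prot r)) = 1 / 2 + ((r : ℝ) + 1) / 2 := by
  show (-∑ y, margY (Prot r) y * Real.logb 2 (margY (Prot r) y)) = _
  rw [Fintype.sum_option, margY_none, logb_half]
  have h : ∀ z : Fin r → Bool, margY (Prot r) (some z) * Real.logb 2 (margY (Prot r) (some z))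
      = bR r * (-((r : ℝ) + 1)) := by
    intro z
    rw [margY_some, logb_bR]
  rw [Finset.sum_congr rfl fun z _ => h z, Finset.sum_const, nsmul_eq_mul, card_real]
  linear_combination ((r : ℝ) + 1) * bR_mul_pow r

lemma shannon_P : shannonEntropy (Prot r) = (r : ℝ) + 1 := by
  show (-∑ p, Prot r p * Real.logb 2 (Prot r p)) = _
  rw [Fintype.sum_prod_type]
  have hx : ∀ x : Fin r → Bool,
      (∑ y, Prot r (x, y) * Real.logb 2 (Prot r (x, y)))
        = 2 * (bR r * Real.logb 2 (bR r)) := by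
    intro x
    rw [Fintype.sum_option]
    have h1 : Prot r (x, none) * Real.logb 2 (Prot r (x, none))
        = bR r * Real.logb 2 (bR r) := rfl
    have h2 : ∀ z, Prot r (x, some z) * Real.logb 2 (Prot r (x, some z))
        = if z = x then bR r * Real.logb 2 (bR r) else 0 := by
      intro z
      show (if z = x then bR r else 0) * Real.logb 2 (if z = x then bR r else 0) = _
      split_ifs
      · rfl
      · rw [zero_mul]
    rw [h1, Finset.sum_congr rfl fun z _ => h2 z, Finset.sum_ite_eq' Finset.univ x]
    simp only [Finset.mem_univ, if_true]
    ring
  rw [Finset.sum_congr rfl fun x _ => hx x, Finset.sum_const, nsmul_eq_mul, card_real, logb_bR]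
  linear_combination (2 * (r : ℝ) + 2) * bR_mul_pow r

lemma mutualInfo_Prot : mutualInfo (Prot r) = (r : ℝ) / 2 := by
  rw [mutualInfo, shannon_margX, shannon_margY, shannon_P]
  ring

end RotFinal

/-- for every phase function `θ`, the reduced density matrix
`ρ_A = tr_B |ψ_θ⟩⟨ψ_θ|` of the regular embedding `ψ_θ` of `P^{ROT^r}` has eigenvalue
`1/2 + 2^{−(r+1)}` with multiplicity `1` and eigenvalue `2^{−(r+1)}` with multiplicity
`2^r − 1`; consequently the leakage of `ψ_θ` is independent of `θ` and equals `Δ_r`,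
and for `r = 1` it equals `h(1/4) − 1/2`. -/
theorem rot_regular_embedding_leakage (r : ℕ) (hr : 1 ≤ r)
    (θ : (Fin r → Bool) × Option (Fin r → Bool) → ℝ) :
    (∃ h : (trRight (outer (regEmbed (Prot r) θ))).IsHermitian,
      Finset.univ.val.map h.eigenvalues =
        ((1 / 2 + 2 ^ (-(r + 1 : ℤ)) : ℝ)) ::ₘ
          Multiset.replicate (2 ^ r - 1) ((2 : ℝ) ^ (-(r + 1 : ℤ)))) ∧
    vonNeumannEntropy (trLeft (outer (regEmbed (Prot r) θ))) - mutualInfo (Prot r) =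
      rotLeakage r ∧
    (r = 1 →
      vonNeumannEntropy (trLeft (outer (regEmbed (Prot r) θ))) - mutualInfo (Prot r) =
        binEnt (1 / 4) - 1 / 2) := by
  have hA := trRight_isHermitian (regEmbed (Prot r) θ)
  have hB := trLeft_isHermitian (regEmbed (Prot r) θ)
  have key2 : vonNeumannEntropy (trLeft (outer (regEmbed (Prot r) θ))) - mutualInfo (Prot r)
      = rotLeakage r := by
    unfold vonNeumannEntropy
    rw [dif_pos hB, mutualInfo_Prot]
    have hsh : shannonEntropy hB.eigenvalues = -∑ c, dB r c * Real.logb 2 (dB r c) :=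
      shannon_eq_of_multiset_eq (eigB_multiset r θ hB)
    rw [hsh, shannon_dB r]
    unfold rotLeakage aR bR
    ring
  refine ⟨⟨hA, (eigA_multiset r θ hA).trans (dA_multiset r)⟩, key2, fun h1 => ?_⟩
  subst h1
  rw [key2]
  unfold rotLeakage binEnt
  have h4 : Real.logb 2 (1 / 4 : ℝ) = -2 := by
    rw [show (1 / 4 : ℝ) = (2 : ℝ) ^ (-2 : ℤ) by norm_num, logb_two_zpow]
    norm_num
  norm_num [h4]

end
end
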